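/- arXiv:2405.09635 — 4 statements merged into one kernel-verified Lean document; each statement's English description precedes it below -/
import Mathlib

section
/- In a finite poset P whose Hasse diagram is a tree, every nonempty interval {z ∈ P : x ≤ z ≤ y} (for x, y ∈ P with x ≤ y) is a chain, i.e., any two elements of the interval are comparable. -/
/-- The Hasse diagram of a poset: vertices are the elements, with an edge between
`u` and `v` whenever one covers the other. -/
def hasse (P : Type*) [PartialOrder P] : SimpleGraph P where
  Adj u v := u ⋖ v ∨ v ⋖ u
  symm := ⟨fun u v h => Or.symm h⟩
  loopless := by
    constructor
    intro u h
    rcases h with h | h <;> exact absurd h.lt (lt_irrefl u)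

section Aux

variable {P : Type*} [PartialOrder P] [Fintype P]

/-- In a finite poset, above any `x < y` there is a cover of `x` below `y`. -/
lemma hasse_exists_cov {x y : P} (hxy : x < y) : ∃ z, x ⋖ z ∧ z ≤ y := by
  obtain ⟨z, hz, hmin⟩ := Set.Finite.exists_minimalFor id (Set.Ioc x y)
    (Set.toFinite _) ⟨y, hxy, le_refl y⟩
  refine ⟨z, ⟨hz.1, fun c hc hcz => ?_⟩, hz.2⟩
  have : z ≤ c := hmin ⟨hc, hcz.le.trans hz.2⟩ hcz.le
  exact absurd (this.trans_lt hcz) (lt_irrefl z)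

lemma hasse_exists_walk_aux :
    ∀ n (x y : P), Set.ncard {u : P | x ≤ u} ≤ n → x ≤ y →
      ∃ p : (hasse P).Walk x y, List.Chain' (· ⋖ ·) p.support := by
  intro n
  induction n with
  | zero =>
    intro x y hcard _
    have : 0 < Set.ncard {u : P | x ≤ u} :=
      Set.ncard_pos (Set.toFinite _) |>.mpr ⟨x, le_refl x⟩
    omega
  | succ n ih =>
    intro x y hcard hxy
    rcases eq_or_lt_of_le hxy with rfl | hlt
    · exact ⟨SimpleGraph.Walk.nil, List.isChain_singleton _⟩
    · obtain ⟨z, hcov, hzy⟩ := hasse_exists_cov hlt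
      have hsub : {u : P | z ≤ u} ⊂ {u : P | x ≤ u} := by
        constructor
        · intro u hu; exact hcov.le.trans hu
        · intro hsub
          exact absurd (hsub (le_refl x : x ∈ {u : P | x ≤ u})) (not_le_of_gt hcov.lt)
      have hlt' : Set.ncard {u : P | z ≤ u} < Set.ncard {u : P | x ≤ u} :=
        Set.ncard_lt_ncard hsub (Set.toFinite _)
      obtain ⟨p, hp⟩ := ih z y (by omega) hzy
      refine ⟨SimpleGraph.Walk.cons (Or.inl hcov) p, ?_⟩
      show List.Chain' (· ⋖ ·) (x :: p.support)
      rw [p.support_eq_cons]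
      rw [p.support_eq_cons] at hp
      exact List.isChain_cons_cons.mpr ⟨hcov, hp⟩

/-- In a finite poset, `x ≤ y` yields a walk in the Hasse diagram whose support is a
cover-chain. -/
lemma hasse_exists_walk {x y : P} (hxy : x ≤ y) :
    ∃ p : (hasse P).Walk x y, List.Chain' (· ⋖ ·) p.support :=
  hasse_exists_walk_aux _ x y le_rfl hxy

lemma hasse_support_pairwise {x y : P} {p : (hasse P).Walk x y}
    (h : List.Chain' (· ⋖ ·) p.support) : p.support.Pairwise (· < ·) :=
  List.isChain_iff_pairwise.mp (h.imp fun _ _ hc => hc.lt)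

lemma pairwise_head_le {l : List P} (h : l.Pairwise (· < ·)) (hl : l ≠ [])
    {u : P} (hu : u ∈ l) : l.head hl ≤ u := by
  rcases l with _ | ⟨a, t⟩
  · exact absurd rfl hl
  · rcases List.mem_cons.mp hu with rfl | hu
    · exact le_refl _
    · exact ((List.pairwise_cons.mp h).1 u hu).le

lemma pairwise_le_getLast {l : List P} (h : l.Pairwise (· < ·)) (hl : l ≠ [])
    {u : P} (hu : u ∈ l) : u ≤ l.getLast hl := by
  have hdl := List.dropLast_append_getLast hl
  rw [← hdl] at h hu
  rcases List.mem_append.mp hu with hu | hu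
  · exact ((List.pairwise_append.mp h).2.2 u hu _ (List.mem_singleton_self _)).le
  · rw [List.mem_singleton.mp hu]

/-- A walk whose support is a cover-chain is a path. -/
lemma hasse_isPath {x y : P} {p : (hasse P).Walk x y}
    (h : List.Chain' (· ⋖ ·) p.support) : p.IsPath := by
  rw [SimpleGraph.Walk.isPath_def]
  exact (hasse_support_pairwise h).nodup

/-- Concatenation of two cover-chain walks through `z` is a cover-chain walk. -/
lemma hasse_append_chain {x z y : P} {p : (hasse P).Walk x z} {q : (hasse P).Walk z y}
    (hp : List.Chain' (· ⋖ ·) p.support) (hq : List.Chain' (· ⋖ ·) q.support) :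
    List.Chain' (· ⋖ ·) (p.append q).support := by
  rw [SimpleGraph.Walk.support_append]
  refine hp.append ?_ ?_
  · rw [q.support_eq_cons] at hq
    exact hq.tail
  · intro a ha b hb
    have ha' : a = z := by
      rw [List.getLast?_eq_getLast p.support_ne_nil, p.getLast_support] at ha
      exact (Option.some_inj.mp ha).symm
    subst ha'
    rw [q.support_eq_cons] at hq
    exact (List.isChain_cons.mp hq).1 b hb

end Aux

/-- In a finite poset whose Hasse diagram is a tree, every interval
`{z : x ≤ z ≤ y}` is a chain: any two of its elements are comparable. -/
theorem stmt2 {P : Type*} [PartialOrder P] [Fintype P] (h : (hasse P).IsTree) :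
    ∀ x y : P, x ≤ y → ∀ z ∈ Set.Icc x y, ∀ w ∈ Set.Icc x y, z ≤ w ∨ w ≤ z := by
  intro x y _ z hz w hw
  obtain ⟨p1, hp1⟩ := hasse_exists_walk (P := P) hz.1
  obtain ⟨p2, hp2⟩ := hasse_exists_walk (P := P) hz.2
  obtain ⟨q1, hq1⟩ := hasse_exists_walk (P := P) hw.1
  obtain ⟨q2, hq2⟩ := hasse_exists_walk (P := P) hw.2
  have hpz := hasse_append_chain hp1 hp2
  have hpw := hasse_append_chain hq1 hq2
  obtain ⟨p0, -, hu⟩ := h.existsUnique_path x y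
  have heq : p1.append p2 = q1.append q2 :=
    (hu _ (hasse_isPath hpz)).trans (hu _ (hasse_isPath hpw)).symm
  have hzmem : z ∈ (q1.append q2).support := by
    rw [← heq]
    exact (SimpleGraph.Walk.mem_support_append_iff _ _).mpr (Or.inl p1.end_mem_support)
  rcases (SimpleGraph.Walk.mem_support_append_iff _ _).mp hzmem with hm | hm
  · left
    have := pairwise_le_getLast (hasse_support_pairwise hq1) q1.support_ne_nil hm
    rwa [q1.getLast_support] at this
  · right
    have := pairwise_head_le (hasse_support_pairwise hq2) q2.support_ne_nil hm
    rwa [q2.head_support] at this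
end

section
/- Let k ≥ 1 and a ≥ 1 be integers and ε > 0. If F ⊆ 2^[n] is a set system with |F| > ((k-1)·a + ε)·C(n, ⌊n/2⌋), then the number of (k,a)-marked chains whose markers all lie in F is at least (ε/k)·n!. -/
def memChain {n : ℕ} (σ : Equiv.Perm (Fin n)) (A : Finset (Fin n)) : Prop :=
  A = Finset.image σ (Finset.univ.filter (fun j => (j : ℕ) < A.card))

namespace MarkedAux
open Finset

variable {n : ℕ}

def idx (n c : ℕ) : Finset (Fin n) := Finset.univ.filter (fun j => (j : ℕ) < c)

lemma card_idx {c : ℕ} (hc : c ≤ n) : (idx n c).card = c := by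
  have : (idx n c).card = (Finset.range c).card := by
    refine Finset.card_bij (fun a _ => (a : ℕ)) ?_ ?_ ?_
    · intro a ha; simp [idx] at ha ⊢; omega
    · intro a _ b _ h; exact Fin.val_injective h
    · intro b hb; simp at hb; exact ⟨⟨b, lt_of_lt_of_le hb hc⟩, by simp [idx, hb], rfl⟩
  simpa using this

def chainSet (σ : Equiv.Perm (Fin n)) (c : ℕ) : Finset (Fin n) := (idx n c).image σ

lemma card_chainSet (σ : Equiv.Perm (Fin n)) {c : ℕ} (hc : c ≤ n) :
    (chainSet σ c).card = c := by
  rw [chainSet, Finset.card_image_of_injective _ σ.injective, card_idx hc]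

lemma memChain_chainSet (σ : Equiv.Perm (Fin n)) {c : ℕ} (hc : c ≤ n) :
    memChain σ (chainSet σ c) := by
  rw [memChain, card_chainSet σ hc]; rfl

lemma chainSet_subset (σ : Equiv.Perm (Fin n)) {c c' : ℕ} (h : c ≤ c') :
    chainSet σ c ⊆ chainSet σ c' := by
  apply Finset.image_subset_image
  intro x hx; simp [idx] at hx ⊢; omega

lemma chainSet_ssubset (σ : Equiv.Perm (Fin n)) {c c' : ℕ} (h : c < c') (hc' : c' ≤ n) :
    chainSet σ c ⊂ chainSet σ c' := by
  rw [Finset.ssubset_iff_subset_ne]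
  refine ⟨chainSet_subset σ h.le, fun heq => ?_⟩
  have h1 := card_chainSet σ (le_trans h.le hc')
  rw [heq, card_chainSet σ hc'] at h1
  omega

lemma card_sdiff_chainSet (σ : Equiv.Perm (Fin n)) {c c' : ℕ} (h : c ≤ c') (hc' : c' ≤ n) :
    (chainSet σ c' \ chainSet σ c).card = c' - c := by
  rw [Finset.card_sdiff_of_subset (chainSet_subset σ h), card_chainSet σ hc',
    card_chainSet σ (le_trans h hc')]

section fiber
variable (c : ℕ) (hc : c ≤ n) (A : Finset (Fin n)) (hA : A.card = c)

noncomputable def eB (B : Finset (Fin n)) (hB : B.card = c) : {x : Fin n // x ∈ B} ≃ Fin c :=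
  B.equivFinOfCardEq hB

noncomputable def eC (B : Finset (Fin n)) (hB : B.card = c) : {x : Fin n // x ∉ B} ≃ Fin (n - c) :=
  (Equiv.subtypeEquivRight (fun x => (Finset.mem_compl (s := B)).symm)).trans
    (Bᶜ.equivFinOfCardEq (by rw [Finset.card_compl, hB]; simp))

noncomputable def buildPerm (π : Equiv.Perm (Fin c)) (ρ : Equiv.Perm (Fin (n - c))) :
    Equiv.Perm (Fin n) :=
  (Equiv.sumCompl (· ∈ idx n c)).symm.trans
    ((Equiv.sumCongr ((eB c (idx n c) (card_idx hc)).trans (π.trans (eB c A hA).symm))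
       ((eC c (idx n c) (card_idx hc)).trans (ρ.trans (eC c A hA).symm))).trans
      (Equiv.sumCompl (· ∈ A)))

lemma buildPerm_apply_mem (π : Equiv.Perm (Fin c)) (ρ : Equiv.Perm (Fin (n - c)))
    {x : Fin n} (hx : x ∈ idx n c) :
    buildPerm c hc A hA π ρ x
      = ↑((eB c A hA).symm (π (eB c (idx n c) (card_idx hc) ⟨x, hx⟩))) := by
  simp [buildPerm, Equiv.sumCompl_symm_apply_of_pos (p := (· ∈ idx n c)) hx]

lemma buildPerm_apply_not_mem (π : Equiv.Perm (Fin c)) (ρ : Equiv.Perm (Fin (n - c)))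
    {x : Fin n} (hx : x ∉ idx n c) :
    buildPerm c hc A hA π ρ x
      = ↑((eC c A hA).symm (ρ (eC c (idx n c) (card_idx hc) ⟨x, hx⟩))) := by
  simp [buildPerm, Equiv.sumCompl_symm_apply_of_neg (p := (· ∈ idx n c)) hx]

lemma buildPerm_injective :
    Function.Injective (fun p : Equiv.Perm (Fin c) × Equiv.Perm (Fin (n - c)) =>
      buildPerm c hc A hA p.1 p.2) := by
  rintro ⟨π, ρ⟩ ⟨π', ρ'⟩ h
  have h' : buildPerm c hc A hA π ρ = buildPerm c hc A hA π' ρ' := h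
  simp only [Prod.mk.injEq]
  constructor
  · ext y
    have hx := ((eB c (idx n c) (card_idx hc)).symm y).2
    have h1 := buildPerm_apply_mem c hc A hA π ρ hx
    have h2 := buildPerm_apply_mem c hc A hA π' ρ' hx
    rw [h', h2] at h1
    have h4 := (eB c A hA).symm.injective (Subtype.coe_injective h1.symm)
    have h5 : (⟨((eB c (idx n c) (card_idx hc)).symm y : Fin n), hx⟩ :
        {x : Fin n // x ∈ idx n c}) = (eB c (idx n c) (card_idx hc)).symm y := rfl
    rw [h5, Equiv.apply_symm_apply] at h4
    rw [h4]
  · ext y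
    have hx := ((eC c (idx n c) (card_idx hc)).symm y).2
    have h1 := buildPerm_apply_not_mem c hc A hA π ρ hx
    have h2 := buildPerm_apply_not_mem c hc A hA π' ρ' hx
    rw [h', h2] at h1
    have h4 := (eC c A hA).symm.injective (Subtype.coe_injective h1.symm)
    have h5 : (⟨((eC c (idx n c) (card_idx hc)).symm y : Fin n), hx⟩ :
        {x : Fin n // x ∉ idx n c}) = (eC c (idx n c) (card_idx hc)).symm y := rfl
    rw [h5, Equiv.apply_symm_apply] at h4
    rw [h4]

lemma chainSet_buildPerm (π : Equiv.Perm (Fin c)) (ρ : Equiv.Perm (Fin (n - c))) :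
    chainSet (buildPerm c hc A hA π ρ) c = A := by
  have hsub : chainSet (buildPerm c hc A hA π ρ) c ⊆ A := by
    intro y hy
    rw [chainSet, Finset.mem_image] at hy
    obtain ⟨x, hx, rfl⟩ := hy
    rw [buildPerm_apply_mem c hc A hA π ρ hx]
    exact ((eB c A hA).symm _).2
  refine Finset.eq_of_subset_of_card_le hsub ?_
  rw [hA, card_chainSet _ hc]

include hc hA in
lemma fiber_lower :
    c.factorial * (n - c).factorial
      ≤ (Finset.univ.filter fun σ : Equiv.Perm (Fin n) => chainSet σ c = A).card := by
  classical
  rw [← Fintype.card_subtype]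
  have hinj : Function.Injective
      (fun p : Equiv.Perm (Fin c) × Equiv.Perm (Fin (n - c)) =>
        (⟨buildPerm c hc A hA p.1 p.2, chainSet_buildPerm c hc A hA p.1 p.2⟩ :
          {σ : Equiv.Perm (Fin n) // chainSet σ c = A})) := by
    intro p q hpq
    exact buildPerm_injective c hc A hA (Subtype.ext_iff.mp hpq)
  have := Fintype.card_le_of_injective _ hinj
  simpa [Fintype.card_perm] using this

end fiber

section counting
variable (F : Finset (Finset (Fin n)))

/-- the cardinalities of members of `F` lying on the chain of `σ` -/
def SS (σ : Equiv.Perm (Fin n)) : Finset ℕ :=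
  (Finset.range (n + 1)).filter (fun c => chainSet σ c ∈ F)

lemma key_count :
    F.card * n.factorial
      ≤ n.choose (n / 2) * ∑ σ : Equiv.Perm (Fin n), (SS F σ).card := by
  classical
  have hswap : ∑ σ : Equiv.Perm (Fin n), (SS F σ).card
      = ∑ c ∈ Finset.range (n + 1),
          (Finset.univ.filter fun σ : Equiv.Perm (Fin n) => chainSet σ c ∈ F).card := by
    simp_rw [SS, Finset.card_filter]
    rw [Finset.sum_comm]
  rw [hswap, Finset.mul_sum]
  have hFsplit : F.card = ∑ c ∈ Finset.range (n + 1),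
      (F.filter fun A => A.card = c).card := by
    refine Finset.card_eq_sum_card_fiberwise ?_
    intro A _
    rw [Finset.mem_coe, Finset.mem_range]
    exact Nat.lt_succ_of_le (by simpa using Finset.card_le_univ A)
  rw [hFsplit, Finset.sum_mul]
  refine Finset.sum_le_sum ?_
  intro c hcr
  have hc : c ≤ n := by rw [Finset.mem_range] at hcr; omega
  -- fiberwise decomposition of the σ count
  have hfib : (Finset.univ.filter fun σ : Equiv.Perm (Fin n) => chainSet σ c ∈ F).card
      = ∑ A ∈ F.filter (fun A => A.card = c),
          ((Finset.univ.filter fun σ : Equiv.Perm (Fin n) => chainSet σ c ∈ F).filter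
            (fun σ => chainSet σ c = A)).card := by
    refine Finset.card_eq_sum_card_fiberwise ?_
    intro σ hσ
    rw [Finset.mem_coe, Finset.mem_filter] at hσ ⊢
    exact ⟨hσ.2, card_chainSet σ hc⟩
  rw [hfib]
  have hterm : ∀ A ∈ F.filter (fun A => A.card = c),
      c.factorial * (n - c).factorial
        ≤ ((Finset.univ.filter fun σ : Equiv.Perm (Fin n) => chainSet σ c ∈ F).filter
            (fun σ => chainSet σ c = A)).card := by
    intro A hA
    rw [Finset.mem_filter] at hA
    have heq : ((Finset.univ.filter fun σ : Equiv.Perm (Fin n) => chainSet σ c ∈ F).filter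
            (fun σ => chainSet σ c = A))
        = Finset.univ.filter fun σ : Equiv.Perm (Fin n) => chainSet σ c = A := by
      rw [Finset.filter_filter]
      ext σ
      simp only [Finset.mem_filter, Finset.mem_univ, true_and]
      constructor
      · exact fun h => h.2
      · intro h; exact ⟨by rw [h]; exact hA.1, h⟩
    rw [heq]
    exact fiber_lower c hc A hA.2
  calc (F.filter fun A => A.card = c).card * n.factorial
      ≤ (F.filter fun A => A.card = c).card
          * (n.choose (n / 2) * (c.factorial * (n - c).factorial)) := by
        apply Nat.mul_le_mul_left
        calc n.factorial = n.choose c * c.factorial * (n - c).factorial :=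
              (Nat.choose_mul_factorial_mul_factorial hc).symm
          _ ≤ n.choose (n / 2) * c.factorial * (n - c).factorial := by
              apply Nat.mul_le_mul_right
              apply Nat.mul_le_mul_right
              exact Nat.choose_le_middle c n
          _ = n.choose (n / 2) * (c.factorial * (n - c).factorial) := by ring
    _ = n.choose (n / 2) * ((F.filter fun A => A.card = c).card
          * (c.factorial * (n - c).factorial)) := by ring
    _ ≤ n.choose (n / 2) * ∑ A ∈ F.filter (fun A => A.card = c),
          ((Finset.univ.filter fun σ : Equiv.Perm (Fin n) => chainSet σ c ∈ F).filter
            (fun σ => chainSet σ c = A)).card := by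
        apply Nat.mul_le_mul_left
        calc (F.filter fun A => A.card = c).card * (c.factorial * (n - c).factorial)
            = ∑ _A ∈ F.filter (fun A => A.card = c), c.factorial * (n - c).factorial := by
              rw [Finset.sum_const, smul_eq_mul]
          _ ≤ _ := Finset.sum_le_sum hterm

end counting

/-- gap lemma for order embeddings `Fin m ↪o ℕ` -/
lemma orderEmb_gap {m : ℕ} (f : Fin m ↪o ℕ) (d : ℕ) :
    ∀ (x y : Fin m), (y : ℕ) = (x : ℕ) + d → f x + d ≤ f y := by
  induction d with
  | zero =>
    intro x y h
    have : x = y := Fin.ext (by omega)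
    rw [this]; omega
  | succ d ih =>
    intro x y h
    have hy' : (x : ℕ) + d < m := by have := y.isLt; omega
    have h1 := ih x ⟨(x : ℕ) + d, hy'⟩ rfl
    have h2 : f ⟨(x : ℕ) + d, hy'⟩ < f y := by
      apply f.strictMono
      rw [Fin.lt_def]
      simp; omega
    omega

section markers
variable (k a : ℕ) (F : Finset (Finset (Fin n)))

/-- the number of marked chains guaranteed on the chain of `σ` -/
def DD (σ : Equiv.Perm (Fin n)) : ℕ := (SS F σ).card - (k - 1) * a

lemma SS_mem_le {σ : Equiv.Perm (Fin n)} {c : ℕ} (h : c ∈ SS F σ) :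
    c ≤ n ∧ chainSet σ c ∈ F := by
  rw [SS, Finset.mem_filter, Finset.mem_range] at h
  exact ⟨by omega, h.2⟩

lemma marker_props (hk : 1 ≤ k) (ha : 1 ≤ a) (σ : Equiv.Perm (Fin n)) (t : ℕ)
    (ht : t < DD k a F σ) :
    ∃ g : Fin k → Finset (Fin n),
      (∀ i, memChain σ (g i)) ∧ (∀ i, g i ∈ F) ∧
      (∀ i j : Fin k, i < j → g j ⊂ g i) ∧
      (∀ i j : Fin k, (j : ℕ) = (i : ℕ) + 1 → a ≤ (g i \ g j).card) ∧
      ((g ⟨k - 1, by omega⟩).card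
        = (SS F σ).orderEmbOfFin rfl ⟨t, by rw [DD] at ht; omega⟩) := by
  have htc : t < (SS F σ).card - (k - 1) * a := ht
  set f := (SS F σ).orderEmbOfFin rfl with hf
  have hbound : ∀ i : Fin k, t + (k - 1 - (i : ℕ)) * a < (SS F σ).card := by
    intro i
    have h1 : (k - 1 - (i : ℕ)) * a ≤ (k - 1) * a :=
      Nat.mul_le_mul_right a (Nat.sub_le _ _)
    omega
  set g : Fin k → Finset (Fin n) :=
    fun i => chainSet σ (f ⟨t + (k - 1 - (i : ℕ)) * a, hbound i⟩) with hg
  have hmem : ∀ i : Fin k, f ⟨t + (k - 1 - (i : ℕ)) * a, hbound i⟩ ≤ n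
      ∧ chainSet σ (f ⟨t + (k - 1 - (i : ℕ)) * a, hbound i⟩) ∈ F := by
    intro i
    exact SS_mem_le F (Finset.orderEmbOfFin_mem _ rfl _)
  refine ⟨g, ?_, ?_, ?_, ?_, ?_⟩
  · intro i
    exact memChain_chainSet σ (hmem i).1
  · intro i
    exact (hmem i).2
  · intro i j hij
    have hji : (j : ℕ) ≤ k - 1 := by have := j.isLt; omega
    have h1 : k - 1 - (j : ℕ) < k - 1 - (i : ℕ) := by
      have := Fin.lt_def.mp hij; omega
    have h2 : (k - 1 - (j : ℕ)) * a < (k - 1 - (i : ℕ)) * a :=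
      (Nat.mul_lt_mul_right (by omega : 0 < a)).mpr h1
    have h3 : f ⟨t + (k - 1 - (j : ℕ)) * a, hbound j⟩
        < f ⟨t + (k - 1 - (i : ℕ)) * a, hbound i⟩ := by
      apply f.strictMono
      rw [Fin.lt_def]; simp; omega
    exact chainSet_ssubset σ h3 (hmem i).1
  · intro i j hij
    have h1 : t + (k - 1 - (i : ℕ)) * a = (t + (k - 1 - (j : ℕ)) * a) + a := by
      have hji : (j : ℕ) ≤ k - 1 := by have := j.isLt; omega
      have h2 : k - 1 - (i : ℕ) = (k - 1 - (j : ℕ)) + 1 := by omega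
      rw [h2, Nat.add_mul, Nat.one_mul]; omega
    have h3 := orderEmb_gap f a ⟨t + (k - 1 - (j : ℕ)) * a, hbound j⟩
      ⟨t + (k - 1 - (i : ℕ)) * a, hbound i⟩ (by simp [h1])
    have h4 : f ⟨t + (k - 1 - (j : ℕ)) * a, hbound j⟩
        ≤ f ⟨t + (k - 1 - (i : ℕ)) * a, hbound i⟩ := by omega
    rw [hg]
    rw [card_sdiff_chainSet σ h4 (hmem i).1]
    omega
  · have h0 : k - 1 - (k - 1) = 0 := by omega
    have hfin : (⟨t + (k - 1 - ((⟨k - 1, by omega⟩ : Fin k) : ℕ)) * a,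
        hbound ⟨k - 1, by omega⟩⟩ : Fin (SS F σ).card)
        = ⟨t, by omega⟩ := by
      apply Fin.ext; simp
    rw [hg]
    simp only [hfin]
    exact card_chainSet σ (by
      have := SS_mem_le F (Finset.orderEmbOfFin_mem (SS F σ) rfl ⟨t, by omega⟩)
      exact this.1)

lemma marked_lower (hk : 1 ≤ k) (ha : 1 ≤ a) :
    ∑ σ : Equiv.Perm (Fin n), DD k a F σ ≤
      Nat.card {p : Equiv.Perm (Fin n) × (Fin k → Finset (Fin n)) //
        (∀ i, memChain p.1 (p.2 i)) ∧
        (∀ i, p.2 i ∈ F) ∧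
        (∀ i j : Fin k, i < j → p.2 j ⊂ p.2 i) ∧
        (∀ i j : Fin k, (j : ℕ) = (i : ℕ) + 1 → a ≤ (p.2 i \ p.2 j).card)} := by
  classical
  let g0 : ∀ (σ : Equiv.Perm (Fin n)), Fin (DD k a F σ) → (Fin k → Finset (Fin n)) :=
    fun σ t => Classical.choose (marker_props k a F hk ha σ t t.isLt)
  have spec := fun (σ : Equiv.Perm (Fin n)) (t : Fin (DD k a F σ)) =>
    Classical.choose_spec (marker_props k a F hk ha σ t t.isLt)
  let Ψ : (Σ σ : Equiv.Perm (Fin n), Fin (DD k a F σ)) →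
      {p : Equiv.Perm (Fin n) × (Fin k → Finset (Fin n)) //
        (∀ i, memChain p.1 (p.2 i)) ∧
        (∀ i, p.2 i ∈ F) ∧
        (∀ i j : Fin k, i < j → p.2 j ⊂ p.2 i) ∧
        (∀ i j : Fin k, (j : ℕ) = (i : ℕ) + 1 → a ≤ (p.2 i \ p.2 j).card)} :=
    fun x => ⟨(x.1, g0 x.1 x.2),
      (spec x.1 x.2).1, (spec x.1 x.2).2.1, (spec x.1 x.2).2.2.1, (spec x.1 x.2).2.2.2.1⟩
  have hΨ : Function.Injective Ψ := by
    rintro ⟨σ, t⟩ ⟨σ', t'⟩ h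
    have h1 : ((σ, g0 σ t) : Equiv.Perm (Fin n) × (Fin k → Finset (Fin n)))
        = (σ', g0 σ' t') := Subtype.ext_iff.mp h
    have hσ : σ = σ' := congrArg Prod.fst h1
    subst hσ
    have hg : g0 σ t = g0 σ t' := congrArg Prod.snd h1
    have hgg : Classical.choose (marker_props k a F hk ha σ t t.isLt)
        = Classical.choose (marker_props k a F hk ha σ t' t'.isLt) := hg
    have hc1 := (spec σ t).2.2.2.2
    have hc2 := (spec σ t').2.2.2.2
    rw [hgg] at hc1
    rw [hc2] at hc1
    have hft := ((SS F σ).orderEmbOfFin rfl).injective hc1.symm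
    have htt : (t : ℕ) = (t' : ℕ) := by simpa using congrArg Fin.val hft
    exact congrArg (Sigma.mk σ) (Fin.ext htt)
  calc ∑ σ : Equiv.Perm (Fin n), DD k a F σ
      = Fintype.card (Σ σ : Equiv.Perm (Fin n), Fin (DD k a F σ)) := by
        rw [Fintype.card_sigma]; simp
    _ ≤ _ := by
        rw [Nat.card_eq_fintype_card]
        exact Fintype.card_le_of_injective Ψ hΨ

end markers
end MarkedAux

/-- If `|F| > ((k-1)·a + ε)·C(n, ⌊n/2⌋)`, then the number of `(k,a)`-marked chains
whose markers all lie in `F` is at least `(ε/k)·n!`.  A `(k,a)`-marked chain is a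
maximal chain `M` of `2^[n]` (encoded by a permutation of `[n]`) together with
markers `F₁ ⊋ F₂ ⊋ ⋯ ⊋ F_k` in `M` with `|F_i \ F_{i+1}| ≥ a`. -/
theorem stmt3 (k a n : ℕ) (hk : 1 ≤ k) (ha : 1 ≤ a) (ε : ℝ) (hε : 0 < ε)
    (F : Finset (Finset (Fin n)))
    (hF : (((k : ℝ) - 1) * a + ε) * n.choose (n / 2) < F.card) :
    (ε / k) * n.factorial ≤
      Nat.card {p : Equiv.Perm (Fin n) × (Fin k → Finset (Fin n)) //
        (∀ i, memChain p.1 (p.2 i)) ∧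
        (∀ i, p.2 i ∈ F) ∧
        (∀ i j : Fin k, i < j → p.2 j ⊂ p.2 i) ∧
        (∀ i j : Fin k, (j : ℕ) = (i : ℕ) + 1 → a ≤ (p.2 i \ p.2 j).card)} := by
  classical
  have hC : 0 < n.choose (n / 2) := Nat.choose_pos (Nat.div_le_self n 2)
  have hN : 0 < n.factorial := n.factorial_pos
  have hNR : (0 : ℝ) < n.factorial := by exact_mod_cast hN
  have hCR : (0 : ℝ) < n.choose (n / 2) := by exact_mod_cast hC
  -- step 1: the total number of F-members on chains is large
  have h1 := MarkedAux.key_count (n := n) F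
  have h2 : ((F.card : ℝ)) * n.factorial
      ≤ (n.choose (n / 2) : ℝ) * ∑ σ : Equiv.Perm (Fin n), ((MarkedAux.SS F σ).card : ℝ) := by
    exact_mod_cast h1
  have hm : (((k : ℝ) - 1) * a + ε) * n.factorial
      < ∑ σ : Equiv.Perm (Fin n), ((MarkedAux.SS F σ).card : ℝ) := by
    have h3 : (((k : ℝ) - 1) * a + ε) * (n.choose (n / 2) : ℝ) * n.factorial
        < (F.card : ℝ) * n.factorial := mul_lt_mul_of_pos_right hF hNR
    have h4 : (n.choose (n / 2) : ℝ) * ((((k : ℝ) - 1) * a + ε) * n.factorial)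
        < (n.choose (n / 2) : ℝ)
            * ∑ σ : Equiv.Perm (Fin n), ((MarkedAux.SS F σ).card : ℝ) := by
      calc (n.choose (n / 2) : ℝ) * ((((k : ℝ) - 1) * a + ε) * n.factorial)
          = (((k : ℝ) - 1) * a + ε) * (n.choose (n / 2) : ℝ) * n.factorial := by ring
        _ < (F.card : ℝ) * n.factorial := h3
        _ ≤ _ := h2
    exact lt_of_mul_lt_mul_left h4 hCR.le
  -- step 2: lower bound the sum of DD in the reals
  have hper : ∀ σ : Equiv.Perm (Fin n),
      ((MarkedAux.SS F σ).card : ℝ) - ((k : ℝ) - 1) * a ≤ (MarkedAux.DD k a F σ : ℝ) := by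
    intro σ
    rw [MarkedAux.DD]
    have hb : (((k - 1) * a : ℕ) : ℝ) = ((k : ℝ) - 1) * a := by
      push_cast [Nat.cast_sub hk]; ring
    rcases le_or_gt ((k - 1) * a) (MarkedAux.SS F σ).card with h | h
    · rw [Nat.cast_sub h, hb]
    · have h0 : (MarkedAux.SS F σ).card - (k - 1) * a = 0 := by omega
      rw [h0]
      have : ((MarkedAux.SS F σ).card : ℝ) ≤ (((k - 1) * a : ℕ) : ℝ) := by
        exact_mod_cast h.le
      rw [hb] at this
      simp
      linarith
  have hsumper : (∑ σ : Equiv.Perm (Fin n), ((MarkedAux.SS F σ).card : ℝ))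
        - ((k : ℝ) - 1) * a * n.factorial
      ≤ ∑ σ : Equiv.Perm (Fin n), (MarkedAux.DD k a F σ : ℝ) := by
    have hcard : (Finset.univ : Finset (Equiv.Perm (Fin n))).card = n.factorial := by
      rw [Finset.card_univ, Fintype.card_perm, Fintype.card_fin]
    calc (∑ σ : Equiv.Perm (Fin n), ((MarkedAux.SS F σ).card : ℝ))
          - ((k : ℝ) - 1) * a * n.factorial
        = ∑ σ : Equiv.Perm (Fin n),
            (((MarkedAux.SS F σ).card : ℝ) - ((k : ℝ) - 1) * a) := by
          rw [Finset.sum_sub_distrib, Finset.sum_const, hcard, nsmul_eq_mul]; ring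
      _ ≤ _ := Finset.sum_le_sum (fun σ _ => hper σ)
  have hDD : ε * n.factorial ≤ ∑ σ : Equiv.Perm (Fin n), (MarkedAux.DD k a F σ : ℝ) := by
    have : ε * n.factorial
        = (((k : ℝ) - 1) * a + ε) * n.factorial - ((k : ℝ) - 1) * a * n.factorial := by ring
    rw [this]
    have := sub_le_sub_right hm.le (((k : ℝ) - 1) * a * n.factorial)
    linarith [hsumper]
  -- step 3: combine with the counting of marked chains
  have hfinal := MarkedAux.marked_lower k a F hk ha
  have hfinalR : (∑ σ : Equiv.Perm (Fin n), (MarkedAux.DD k a F σ : ℝ))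
      ≤ (Nat.card {p : Equiv.Perm (Fin n) × (Fin k → Finset (Fin n)) //
        (∀ i, memChain p.1 (p.2 i)) ∧
        (∀ i, p.2 i ∈ F) ∧
        (∀ i j : Fin k, i < j → p.2 j ⊂ p.2 i) ∧
        (∀ i j : Fin k, (j : ℕ) = (i : ℕ) + 1 → a ≤ (p.2 i \ p.2 j).card)} : ℝ) := by
    exact_mod_cast hfinal
  have hek : ε / k ≤ ε := by
    apply div_le_self hε.le
    exact_mod_cast hk
  calc (ε / k) * n.factorial ≤ ε * n.factorial :=
        mul_le_mul_of_nonneg_right hek hNR.le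
    _ ≤ ∑ σ : Equiv.Perm (Fin n), (MarkedAux.DD k a F σ : ℝ) := hDD
    _ ≤ _ := hfinalR
end

section
/- Let P be a finite poset whose Hasse diagram is a tree and in which every maximal chain has exactly k elements (P is graded of height k). Then there exist maximal chains C₁, …, C_ℓ of P such that: (i) for every j ∈ [ℓ], the union C₁ ∪ ⋯ ∪ C_j, with the induced order, is a graded poset of height k, and C₁ ∪ ⋯ ∪ C_ℓ = P; (ii) for every 1 < j ≤ ℓ, the set I_j = C_j \ (C₁ ∪ ⋯ ∪ C_{j-1}) is a nonempty interval of P containing a minimal or maximal element of P; (iii) for every 1 < j ≤ ℓ, C_j \ I_j ⊆ C_i for some i < j. -/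
lemma Set.Finite.exists_minimal_wrt_port {α β : Type*} [PartialOrder β] (f : α → β)
    (s : Set α) (h : s.Finite) (hs : s.Nonempty) :
    ∃ a ∈ s, ∀ a' ∈ s, f a' ≤ f a → f a = f a' := by
  obtain ⟨a, ha, hmin⟩ := h.exists_minimalFor f s hs
  exact ⟨a, ha, fun a' ha' hle => le_antisymm (hmin ha' hle) hle⟩

lemma Set.Finite.exists_maximal_wrt_port {α β : Type*} [PartialOrder β] (f : α → β)
    (s : Set α) (h : s.Finite) (hs : s.Nonempty) :
    ∃ a ∈ s, ∀ a' ∈ s, f a ≤ f a' → f a = f a' := by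
  obtain ⟨a, ha, hmax⟩ := h.exists_maximalFor f s hs
  exact ⟨a, ha, fun a' ha' hle => le_antisymm hle (hmax ha' hle)⟩

section ChainCover

variable {P : Type*} [PartialOrder P]

/-- Cover relation relative to a subset `S`. -/
def covIn (S : Set P) (a b : P) : Prop :=
  a ∈ S ∧ b ∈ S ∧ a < b ∧ ∀ z ∈ S, a < z → ¬ z < b

/-- The Hasse diagram of the induced poset on `S`. -/
def GOn (S : Set P) : SimpleGraph P where
  Adj a b := covIn S a b ∨ covIn S b a
  symm := ⟨fun _ _ h => Or.symm h⟩
  loopless := by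
    constructor
    intro a h
    rcases h with h | h <;> exact absurd h.2.2.1 (lt_irrefl a)

/-- `C` is a maximal chain among chains contained in `S`. -/
def MCW (S C : Set P) : Prop :=
  C ⊆ S ∧ IsChain (· ≤ ·) C ∧
    ∀ C', IsChain (· ≤ ·) C' → C ⊆ C' → C' ⊆ S → C' = C

def MinIn (S : Set P) (z : P) : Prop := z ∈ S ∧ ∀ y ∈ S, ¬ y < z

def MaxIn (S : Set P) (z : P) : Prop := z ∈ S ∧ ∀ y ∈ S, ¬ z < y

/-- The set of vertices reachable from `u` in the relative Hasse diagram by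
walks avoiding `s`. -/
def Rg (S : Set P) (s u : P) : Set P := {x | ∃ p : (GOn S).Walk u x, s ∉ p.support}

variable [Fintype P]

lemma exists_covIn_between {S : Set P} {a b : P} (ha : a ∈ S) (hb : b ∈ S) (hab : a < b) :
    ∃ c, covIn S a c ∧ c ≤ b := by
  obtain ⟨c, ⟨hcS, hac, hcb⟩, hmin⟩ :=
    Set.Finite.exists_minimal_wrt_port id {z ∈ S | a < z ∧ z ≤ b} (Set.toFinite _)
      ⟨b, hb, hab, le_refl b⟩
  refine ⟨c, ⟨ha, hcS, hac, ?_⟩, hcb⟩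
  intro z hz haz hzc
  have : z ∈ {z ∈ S | a < z ∧ z ≤ b} := ⟨hz, haz, hzc.le.trans hcb⟩
  exact (ne_of_lt hzc) (hmin z this hzc.le).symm

lemma exists_covIn_between' {S : Set P} {a b : P} (ha : a ∈ S) (hb : b ∈ S) (hab : a < b) :
    ∃ c, covIn S c b ∧ a ≤ c := by
  obtain ⟨c, ⟨hcS, hac, hcb⟩, hmax⟩ :=
    Set.Finite.exists_maximal_wrt_port id {z ∈ S | a ≤ z ∧ z < b} (Set.toFinite _)
      ⟨a, ha, le_refl a, hab⟩
  refine ⟨c, ⟨hcS, hb, hcb, ?_⟩, hac⟩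
  intro z hz hcz hzb
  have : z ∈ {z ∈ S | a ≤ z ∧ z < b} := ⟨hz, hac.trans hcz.le, hzb⟩
  exact (ne_of_lt hcz) (hmax z this hcz.le)

lemma exists_MCW_superset {S C : Set P} (hCS : C ⊆ S) (hC : IsChain (· ≤ ·) C) :
    ∃ D, MCW S D ∧ C ⊆ D := by
  obtain ⟨D, ⟨hD, hCD, hDS⟩, hmax⟩ :=
    Set.Finite.exists_maximal_wrt_port id {C' | IsChain (· ≤ ·) C' ∧ C ⊆ C' ∧ C' ⊆ S}
      (((Set.toFinite S).finite_subsets).subset (fun T hT => hT.2.2))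
      ⟨C, hC, le_refl _, hCS⟩
  refine ⟨D, ⟨hDS, hD, ?_⟩, hCD⟩
  intro C' hC' hDC' hC'S
  exact (hmax C' ⟨hC', hCD.trans hDC', hC'S⟩ hDC').symm

end ChainCover

section ChainCover2

variable {P : Type*} [PartialOrder P] [Fintype P]

lemma MCW.mem_of_comp {S E : Set P} (hE : MCW S E) {z : P} (hzS : z ∈ S)
    (hcomp : ∀ e ∈ E, z ≤ e ∨ e ≤ z) : z ∈ E := by
  have hchain : IsChain (· ≤ ·) (insert z E) := by
    apply hE.2.1.insert
    intro e he _
    exact hcomp e he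
  have := hE.2.2 (insert z E) hchain (Set.subset_insert _ _)
    (Set.insert_subset hzS hE.1)
  rw [← this]; exact Set.mem_insert _ _

/-- A maximal chain within `S` contains a relative lower cover of each of its
non-minimal elements. -/
lemma MCW.pred_cov {S E : Set P} (hE : MCW S E) {x : P} (hx : x ∈ E)
    {z₀ : P} (hz₀ : z₀ ∈ S) (hz₀x : z₀ < x) :
    ∃ p ∈ E, covIn S p x := by
  by_cases hB : ({e ∈ E | e < x} : Set P).Nonempty
  · obtain ⟨p, ⟨hpE, hpx⟩, hmax⟩ :=
      Set.Finite.exists_maximal_wrt_port id {e ∈ E | e < x} (Set.toFinite _) hB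
    have hple : ∀ q ∈ E, q < x → q ≤ p := by
      intro q hq hqx
      rcases hE.2.1.total hq hpE with h | h
      · exact h
      · exact le_of_eq (hmax q ⟨hq, hqx⟩ h).symm
    refine ⟨p, hpE, hE.1 hpE, hE.1 hx, hpx, ?_⟩
    intro z hzS hpz hzx
    have hzE : z ∈ E := by
      apply hE.mem_of_comp hzS
      intro e he
      rcases hE.2.1.total he hx with h | h
      · rcases lt_or_eq_of_le h with h | h
        · exact Or.inr ((hple e he h).trans hpz.le)
        · exact Or.inl (le_of_le_of_eq hzx.le h.symm)
      · exact Or.inl (hzx.le.trans h)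
    exact absurd (hple z hzE hzx) (not_le_of_gt hpz)
  · exfalso
    have hz₀E : z₀ ∈ E := by
      apply hE.mem_of_comp hz₀
      intro e he
      rcases hE.2.1.total he hx with h | h
      · rcases lt_or_eq_of_le h with h | h
        · exact absurd ⟨he, h⟩ (fun hc => hB ⟨e, hc⟩)
        · exact Or.inl (h ▸ hz₀x.le)
      · exact Or.inl (hz₀x.le.trans h)
    exact hB ⟨z₀, hz₀E, hz₀x⟩

lemma MCW.succ_cov {S E : Set P} (hE : MCW S E) {x : P} (hx : x ∈ E)
    {z₀ : P} (hz₀ : z₀ ∈ S) (hz₀x : x < z₀) :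
    ∃ p ∈ E, covIn S x p := by
  by_cases hB : ({e ∈ E | x < e} : Set P).Nonempty
  · obtain ⟨p, ⟨hpE, hpx⟩, hmin⟩ :=
      Set.Finite.exists_minimal_wrt_port id {e ∈ E | x < e} (Set.toFinite _) hB
    have hple : ∀ q ∈ E, x < q → p ≤ q := by
      intro q hq hqx
      rcases hE.2.1.total hq hpE with h | h
      · exact le_of_eq (hmin q ⟨hq, hqx⟩ h)
      · exact h
    refine ⟨p, hpE, hE.1 hx, hE.1 hpE, hpx, ?_⟩
    intro z hzS hxz hzp
    have hzE : z ∈ E := by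
      apply hE.mem_of_comp hzS
      intro e he
      rcases hE.2.1.total he hx with h | h
      · exact Or.inr (h.trans hxz.le)
      · rcases lt_or_eq_of_le h with h | h
        · exact Or.inl (hzp.le.trans (hple e he h))
        · exact Or.inr (le_of_eq_of_le h.symm hxz.le)
    exact absurd (hple z hzE hxz) (not_le_of_gt hzp)
  · exfalso
    have hz₀E : z₀ ∈ E := by
      apply hE.mem_of_comp hz₀
      intro e he
      rcases hE.2.1.total he hx with h | h
      · exact Or.inr (h.trans hz₀x.le)
      · rcases lt_or_eq_of_le h with h | h
        · exact absurd ⟨he, h⟩ (fun hc => hB ⟨e, hc⟩)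
        · exact Or.inr (le_of_eq_of_le h.symm hz₀x.le)
    exact hB ⟨z₀, hz₀E, hz₀x⟩

end ChainCover2

section RegionLemmas

variable {P : Type*} [PartialOrder P]

lemma GOn_adj {S : Set P} {a b : P} :
    (GOn S).Adj a b ↔ covIn S a b ∨ covIn S b a := Iff.rfl

lemma not_mem_Rg_self {S : Set P} {s u : P} : s ∉ Rg S s u := by
  rintro ⟨p, hp⟩
  exact hp p.end_mem_support

lemma mem_Rg_self {S : Set P} {s u : P} (h : s ≠ u) : u ∈ Rg S s u :=
  ⟨SimpleGraph.Walk.nil, by simpa using h⟩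

lemma Rg.adj_mem {S : Set P} {s u x c : P} (hx : x ∈ Rg S s u)
    (hadj : (GOn S).Adj x c) (hc : c ≠ s) : c ∈ Rg S s u := by
  obtain ⟨p, hp⟩ := hx
  refine ⟨p.concat hadj, ?_⟩
  rw [SimpleGraph.Walk.support_concat]
  intro hmem
  rcases List.mem_append.mp hmem with h | h
  · exact hp h
  · exact hc (List.eq_of_mem_singleton h).symm

lemma Rg.shrink {S : Set P} {s u a c : P} (ha : a ∈ Rg S s u)
    (hadj : (GOn S).Adj a c) (hc : c ≠ s) (hs : s ∉ Rg S a c) :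
    Rg S a c ⊆ Rg S s u ∧ a ∉ Rg S a c := by
  classical
  constructor
  · intro x hx
    obtain ⟨q, hq⟩ := hx
    have hsq : s ∉ q.support := by
      intro hsq
      exact hs ⟨q.takeUntil s hsq, fun hmem =>
        hq (SimpleGraph.Walk.support_takeUntil_subset _ _ hmem)⟩
    have hcRg : c ∈ Rg S s u := Rg.adj_mem ha hadj hc
    obtain ⟨p, hp⟩ := hcRg
    refine ⟨p.append q, ?_⟩
    rw [SimpleGraph.Walk.support_append]
    intro hmem
    rcases List.mem_append.mp hmem with h | h
    · exact hp h
    · exact hsq (List.mem_of_mem_tail h)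
  · rintro ⟨q, hq⟩
    exact hq q.end_mem_support

/-- Given two distinct neighbours of `a`, one of them determines a region
avoiding `s`. -/
lemma Rg.select {S : Set P} (hacyc : (GOn S).IsAcyclic) {s a c₁ c₂ : P}
    (h1 : (GOn S).Adj a c₁) (h2 : (GOn S).Adj a c₂) (hne : c₁ ≠ c₂) (has : a ≠ s) :
    ∃ c, (c = c₁ ∨ c = c₂) ∧ c ≠ s ∧ s ∉ Rg S a c := by
  classical
  have key : ∀ c : P, (GOn S).Adj a c → s ∈ Rg S a c →
      ∃ (pa : (GOn S).Path a s) (l : List P), pa.1.support = a :: c :: l := by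
    intro c hadj hsc
    obtain ⟨q, hq⟩ := hsc
    have haq : a ∉ q.toPath.1.support := fun hmem =>
      hq (q.support_toPath_subset hmem)
    refine ⟨⟨SimpleGraph.Walk.cons hadj q.toPath.1, q.toPath.2.cons haq⟩,
      q.toPath.1.support.tail, ?_⟩
    rw [SimpleGraph.Walk.support_cons]
    exact congrArg (a :: ·) (SimpleGraph.Walk.support_eq_cons q.toPath.1)
  by_cases hs1 : s ∈ Rg S a c₁
  · by_cases hc2 : c₂ = s
    · -- c₂ = s : use path uniqueness between singleton path and long path via c₁
      exfalso
      obtain ⟨pa, l, hpa⟩ := key c₁ h1 hs1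
      have hpb : (SimpleGraph.Path.singleton (hc2 ▸ h2) : (GOn S).Path a s).1.support
          = [a, s] := rfl
      have heq := hacyc.path_unique pa (SimpleGraph.Path.singleton (hc2 ▸ h2))
      have hsup : pa.1.support = [a, s] := by rw [heq, hpb]
      rw [hpa] at hsup
      have : c₁ :: l = [s] := by injection hsup
      have hc1 : c₁ = s := by injection this
      exact hne (hc1.trans hc2.symm)
    · -- show s ∉ Rg S a c₂
      refine ⟨c₂, Or.inr rfl, hc2, ?_⟩
      intro hs2
      obtain ⟨pa, l1, hpa⟩ := key c₁ h1 hs1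
      obtain ⟨pb, l2, hpb⟩ := key c₂ h2 hs2
      have heq := hacyc.path_unique pa pb
      have hsup : pa.1.support = pb.1.support := by rw [heq]
      rw [hpa, hpb] at hsup
      have : c₁ :: l1 = c₂ :: l2 := by injection hsup
      have : c₁ = c₂ := by injection this
      exact hne this
  · by_cases hc1 : c₁ = s
    · refine ⟨c₂, Or.inr rfl, fun h => hne (hc1.trans h.symm), ?_⟩
      intro hs2
      obtain ⟨pa, l, hpa⟩ := key c₂ h2 hs2
      have hpb : (SimpleGraph.Path.singleton (hc1 ▸ h1) : (GOn S).Path a s).1.support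
          = [a, s] := rfl
      have heq := hacyc.path_unique pa (SimpleGraph.Path.singleton (hc1 ▸ h1))
      have hsup : pa.1.support = [a, s] := by rw [heq, hpb]
      rw [hpa] at hsup
      have : c₂ :: l = [s] := by injection hsup
      have hc2 : c₂ = s := by injection this
      exact hne (hc1.trans hc2.symm)
    · exact ⟨c₁, Or.inl rfl, hc1, hs1⟩

end RegionLemmas

section Surgery

variable {P : Type*} [PartialOrder P]

lemma IsAcyclic.anti {G H : SimpleGraph P} (hGH : G ≤ H) (hH : H.IsAcyclic) :
    G.IsAcyclic := by
  rw [SimpleGraph.isAcyclic_iff_path_unique] at hH ⊢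
  intro v w p q
  have := hH ⟨p.1.mapLe hGH, p.2.mapLe hGH⟩ ⟨q.1.mapLe hGH, q.2.mapLe hGH⟩
  have hwalk : p.1.mapLe hGH = q.1.mapLe hGH := congrArg Subtype.val this
  have hinj := SimpleGraph.Walk.map_injective_of_injective
    (f := SimpleGraph.Hom.ofLE hGH) (fun a b h => h) v w
  exact Subtype.ext (hinj hwalk)

variable {S : Set P} {Y : Set P} {s : P}
  (hb : ∀ a b : P, (GOn S).Adj a b → b ∈ Y → a ∉ Y → a = s)

include hb in
lemma exit_mem : ∀ {x y : P} (p : (GOn S).Walk x y), x ∈ Y → y ∉ Y → s ∈ p.support := by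
  intro x y p
  induction p with
  | nil => intro hx hy; exact absurd hx hy
  | cons h q ih =>
    intro hx hy
    rename_i u v w
    by_cases hv : v ∈ Y
    · rw [SimpleGraph.Walk.support_cons]
      exact List.mem_cons_of_mem _ (ih hv hy)
    · have : v = s := hb v u h.symm hx hv
      rw [SimpleGraph.Walk.support_cons]
      exact List.mem_cons_of_mem _ (this ▸ q.start_mem_support)

include hb in
lemma enter_mem : ∀ {x y : P} (p : (GOn S).Walk x y), x ∉ Y →
    (∃ q ∈ p.support, q ∈ Y) → s ∈ p.support := by
  intro x y p
  induction p with
  | nil =>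
    intro hx ⟨q, hq, hqY⟩
    simp only [SimpleGraph.Walk.support_nil, List.mem_singleton] at hq
    exact absurd (hq ▸ hqY) hx
  | cons h q ih =>
    intro hx ⟨z, hz, hzY⟩
    rename_i u v w
    by_cases hv : v ∈ Y
    · have : u = s := hb u v h hv hx
      exact this ▸ SimpleGraph.Walk.start_mem_support _
    · rw [SimpleGraph.Walk.support_cons] at hz ⊢
      rcases List.mem_cons.mp hz with hz | hz
      · exact absurd (hz ▸ hzY) hx
      · exact List.mem_cons_of_mem _ (ih hv ⟨z, hz, hzY⟩)

include hb in
lemma avoid_walk (hsY : s ∉ Y) :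
    ∀ (n : ℕ) {x y : P} (p : (GOn S).Walk x y), p.length ≤ n → x ∉ Y → y ∉ Y →
    ∃ q : (GOn S).Walk x y, ∀ v ∈ q.support, v ∉ Y := by
  classical
  intro n
  induction n with
  | zero =>
    intro x y p hlen hx hy
    cases p with
    | nil => exact ⟨SimpleGraph.Walk.nil, by simpa using hx⟩
    | cons h q => simp at hlen
  | succ n ih =>
    intro x y p hlen hx hy
    cases p with
    | nil => exact ⟨SimpleGraph.Walk.nil, by simpa using hx⟩
    | cons h q =>
      rename_i v
      by_cases hv : v ∈ Y
      · -- x = s, and q must exit Y; cut q at s (= x)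
        have hxs : x = s := hb x v h hv hx
        have hsq : x ∈ q.support := hxs ▸ exit_mem hb q hv hy
        have hq' := q.dropUntil x hsq
        refine ih (q.dropUntil x hsq) ?_ hx hy
        have h1 := SimpleGraph.Walk.length_dropUntil_le q hsq
        have h2 : q.length + 1 ≤ n + 1 := by simpa using hlen
        omega
      · obtain ⟨q', hq'⟩ := ih q (by simpa using hlen) hv hy
        refine ⟨SimpleGraph.Walk.cons h q', ?_⟩
        intro z hz
        rcases List.mem_cons.mp (by simpa [SimpleGraph.Walk.support_cons] using hz) with hz | hz
        · exact hz ▸ hx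
        · exact hq' z hz

lemma walk_avoid_reach {S' : Set P}
    (hadj : ∀ a b : P, (GOn S).Adj a b → a ∉ Y → b ∉ Y → (GOn S').Adj a b) :
    ∀ {x y : P} (p : (GOn S).Walk x y), (∀ v ∈ p.support, v ∉ Y) →
    (GOn S').Reachable x y := by
  intro x y p
  induction p with
  | nil => intro _; exact SimpleGraph.Reachable.refl _
  | cons h q ih =>
    intro hsup
    rename_i u v w
    have hu : u ∉ Y := hsup u (SimpleGraph.Walk.start_mem_support _)
    have hv : v ∉ Y := hsup v (by
      rw [SimpleGraph.Walk.support_cons]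
      exact List.mem_cons_of_mem _ q.start_mem_support)
    exact (SimpleGraph.Adj.reachable (hadj u v h hu hv)).trans
      (ih (fun z hz => hsup z (by
        rw [SimpleGraph.Walk.support_cons]; exact List.mem_cons_of_mem _ hz)))

end Surgery

section UpCase

variable {P : Type*} [PartialOrder P] [Fintype P] {S : Set P} {s u : P}

/-- The up-pendant region above `u`. -/
def UpY (S : Set P) (u : P) : Set P := {x ∈ S | u ≤ x}

lemma covIn.lt' {S : Set P} {a b : P} (h : covIn S a b) : a < b := h.2.2.1

lemma up_sne (hsu : covIn S s u) : s ≠ u := ne_of_lt hsu.lt'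

lemma RgUp_sub (hsu : covIn S s u)
    (hNBl : ∀ a ∈ Rg S s u, ∀ c₁ c₂, covIn S c₁ a → covIn S c₂ a → c₁ = c₂) :
    Rg S s u ⊆ UpY S u := by
  have main : ∀ {a x : P} (p : (GOn S).Walk a x), s ∉ p.support →
      a ∈ Rg S s u → a ∈ S → u ≤ a → x ∈ S ∧ u ≤ x := by
    intro a x p
    induction p with
    | nil => intro _ _ haS hua; exact ⟨haS, hua⟩
    | @cons a b x h q ih =>
      intro hsup haR haS hua
      have hbs : b ≠ s := by
        intro hbs
        apply hsup
        rw [SimpleGraph.Walk.support_cons]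
        exact List.mem_cons_of_mem _ (hbs ▸ q.start_mem_support)
      have hbR : b ∈ Rg S s u := Rg.adj_mem haR h hbs
      have hsq : s ∉ q.support := fun hmem => hsup (by
        rw [SimpleGraph.Walk.support_cons]; exact List.mem_cons_of_mem _ hmem)
      have hub : b ∈ S ∧ u ≤ b := by
        rcases h with h | h
        · exact ⟨h.2.1, hua.trans h.lt'.le⟩
        · -- b is a lower cover of a
          rcases eq_or_lt_of_le hua with heq | hlt
          · -- a = u
            have : b = s := hNBl a haR b s (heq ▸ h) (heq ▸ hsu)
            exact absurd this hbs
          · obtain ⟨c, hc, huc⟩ := exists_covIn_between' hsu.2.1 haS hlt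
            have : b = c := hNBl a haR b c h hc
            exact ⟨h.1, this ▸ huc⟩
      exact ih hsq hbR hub.1 hub.2
  rintro x ⟨p, hp⟩
  exact main p hp (mem_Rg_self (up_sne hsu)) hsu.2.1 le_rfl

lemma RgUp_super (hsu : covIn S s u) : UpY S u ⊆ Rg S s u := by
  intro x
  induction x using WellFoundedLT.induction with
  | ind x ih =>
    rintro ⟨hxS, hux⟩
    rcases eq_or_lt_of_le hux with heq | hlt
    · exact heq ▸ mem_Rg_self (up_sne hsu)
    · obtain ⟨c, hc, huc⟩ := exists_covIn_between' hsu.2.1 hxS hlt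
      have hcR : c ∈ Rg S s u := ih c hc.lt' ⟨hc.1, huc⟩
      have hxs : x ≠ s := by
        intro hxs
        exact absurd (hsu.lt'.trans_le hux) (hxs ▸ lt_irrefl s)
      exact Rg.adj_mem hcR (Or.inl hc) hxs

lemma RgUp_eq (hsu : covIn S s u)
    (hNBl : ∀ a ∈ Rg S s u, ∀ c₁ c₂, covIn S c₁ a → covIn S c₂ a → c₁ = c₂) :
    Rg S s u = UpY S u :=
  le_antisymm (RgUp_sub hsu hNBl) (RgUp_super hsu)

lemma UpY_chain (hsu : covIn S s u)
    (hNBu : ∀ a ∈ Rg S s u, ∀ c₁ c₂, covIn S a c₁ → covIn S a c₂ → c₁ = c₂) :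
    ∀ x ∈ UpY S u, ∀ z ∈ UpY S u, x ≤ z ∨ z ≤ x := by
  intro x
  induction x using WellFoundedLT.induction with
  | ind x ih =>
    rintro ⟨hxS, hux⟩ z ⟨hzS, huz⟩
    rcases eq_or_lt_of_le hux with heq | hlt
    · exact Or.inl (heq ▸ huz)
    · obtain ⟨c, hc, huc⟩ := exists_covIn_between' hsu.2.1 hxS hlt
      rcases ih c hc.lt' ⟨hc.1, huc⟩ z ⟨hzS, huz⟩ with h | h
      · rcases eq_or_lt_of_le h with heq | hlt2
        · exact Or.inr (heq ▸ hc.lt'.le)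
        · obtain ⟨d, hd, hdz⟩ := exists_covIn_between hc.1 hzS hlt2
          have : d = x := hNBu c (RgUp_super hsu ⟨hc.1, huc⟩) d x hd hc
          exact Or.inl (this ▸ hdz)
      · exact Or.inr (h.trans hc.lt'.le)

lemma UpY_top (hsu : covIn S s u)
    (hNBu : ∀ a ∈ Rg S s u, ∀ c₁ c₂, covIn S a c₁ → covIn S a c₂ → c₁ = c₂) :
    ∃ v, v ∈ UpY S u ∧ (∀ z ∈ UpY S u, z ≤ v) ∧ MaxIn S v := by
  obtain ⟨v, hv, hmax⟩ := Set.Finite.exists_maximal_wrt_port id (UpY S u) (Set.toFinite _)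
    ⟨u, hsu.2.1, le_rfl⟩
  have hvmax : ∀ z ∈ UpY S u, z ≤ v := by
    intro z hz
    rcases UpY_chain hsu hNBu z hz v hv with h | h
    · exact h
    · exact le_of_eq (hmax z hz h).symm
  refine ⟨v, hv, hvmax, hv.1, ?_⟩
  intro y hyS hvy
  exact absurd (hvmax y ⟨hyS, hv.2.trans hvy.le⟩) (not_le_of_gt hvy)

lemma UpY_boundary (hsu : covIn S s u)
    (hNBl : ∀ a ∈ Rg S s u, ∀ c₁ c₂, covIn S c₁ a → covIn S c₂ a → c₁ = c₂) :
    ∀ a b : P, (GOn S).Adj a b → b ∈ UpY S u → a ∉ UpY S u → a = s := by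
  intro a b hadj hbY haY
  rcases hadj with h | h
  · rcases eq_or_lt_of_le hbY.2 with heq | hlt
    · exact hNBl u (mem_Rg_self (up_sne hsu)) a s (heq ▸ h) hsu
    · obtain ⟨c, hc, huc⟩ := exists_covIn_between' hsu.2.1 hbY.1 hlt
      have : a = c := hNBl b (RgUp_super hsu hbY) a c h hc
      exact absurd ⟨h.1, this ▸ huc⟩ haY
  · exact absurd ⟨h.2.1, hbY.2.trans h.lt'.le⟩ haY

lemma covIn_diff (hsu : covIn S s u) {a b : P} (h : covIn (S \ UpY S u) a b) :
    covIn S a b := by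
  refine ⟨h.1.1, h.2.1.1, h.2.2.1, ?_⟩
  intro z hzS haz hzb
  by_cases hzY : z ∈ UpY S u
  · exact absurd ⟨h.2.1.1, hzY.2.trans hzb.le⟩ h.2.1.2
  · exact h.2.2.2 z ⟨hzS, hzY⟩ haz hzb

lemma covIn_diff' {Y : Set P} {a b : P} (ha : a ∈ S \ Y) (hb : b ∈ S \ Y)
    (h : covIn S a b) : covIn (S \ Y) a b :=
  ⟨ha, hb, h.2.2.1, fun z hz haz hzb => h.2.2.2 z hz.1 haz hzb⟩

lemma GOn_diff_le (hsu : covIn S s u) : GOn (S \ UpY S u) ≤ GOn S := by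
  intro a b hadj
  rcases hadj with h | h
  · exact Or.inl (covIn_diff hsu h)
  · exact Or.inr (covIn_diff hsu h)

lemma s_mem_diff (hsu : covIn S s u) : s ∈ S \ UpY S u :=
  ⟨hsu.1, fun hs => absurd hs.2 (not_le_of_gt hsu.lt')⟩

lemma w_mem_diff (hsu : covIn S s u) {w : P} (hsw : covIn S s w) (huw : u ≠ w) :
    w ∈ S \ UpY S u := by
  refine ⟨hsw.2.1, fun hw => ?_⟩
  rcases eq_or_lt_of_le hw.2 with heq | hlt
  · exact huw heq
  · exact hsw.2.2.2 u hsu.2.1 hsu.lt' hlt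

end UpCase

section UpCase2

variable {P : Type*} [PartialOrder P] [Fintype P] {S : Set P} {s u w : P}

lemma MCW_lift_up (hsu : covIn S s u) (hsw : covIn S s w) (huw : u ≠ w)
    (hNBl : ∀ a ∈ Rg S s u, ∀ c₁ c₂, covIn S c₁ a → covIn S c₂ a → c₁ = c₂)
    {D : Set P} (hD : MCW (S \ UpY S u) D) : MCW S D := by
  obtain ⟨E, hE, hDE⟩ := exists_MCW_superset (hD.1.trans (Set.diff_subset)) hD.2.1
  by_cases hEY : (E ∩ UpY S u).Nonempty
  · exfalso
    obtain ⟨x, hxE, hxY⟩ := hEY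
    -- s and u belong to E
    have key : ∀ x : P, x ∈ E → x ∈ UpY S u → s ∈ E ∧ u ∈ E := by
      intro x
      induction x using WellFoundedLT.induction with
      | ind x ih =>
        intro hxE hxY
        obtain ⟨p, hpE, hpx⟩ := hE.pred_cov hxE hsu.1 (hsu.lt'.trans_le hxY.2)
        rcases eq_or_lt_of_le hxY.2 with heq | hlt
        · have : p = s := hNBl u (mem_Rg_self (up_sne hsu)) p s (heq ▸ hpx) hsu
          exact ⟨this ▸ hpE, heq ▸ hxE⟩
        · obtain ⟨c, hc, huc⟩ := exists_covIn_between' hsu.2.1 hxY.1 hlt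
          have hpc : p = c := hNBl x (RgUp_super hsu hxY) p c hpx hc
          exact ih p (hpx.lt') hpE (hpc ▸ ⟨hc.1, huc⟩)
    obtain ⟨hsE, huE⟩ := key x hxE hxY
    -- every element of D lies below s
    have hDle : ∀ d ∈ D, d ≤ s := by
      intro d hdD
      have hdE := hDE hdD
      have hdY : d ∉ UpY S u := (hD.1 hdD).2
      rcases hE.2.1.total hdE huE with h | h
      · -- d ≤ u, so d < u, compare with s
        have hdu : d < u := lt_of_le_of_ne h (fun hdu => hdY ⟨hE.1 hdE, hdu.ge⟩)
        rcases hE.2.1.total hdE hsE with h2 | h2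
        · exact h2
        · rcases eq_or_lt_of_le h2 with heq | hlt
          · exact le_of_eq heq.symm
          · exact absurd hdu (hsu.2.2.2 d (hE.1 hdE) hlt)
      · exact absurd ⟨hE.1 hdE, h⟩ hdY
    -- contradiction with w
    have hwD : w ∉ D := fun hwD => absurd (hDle w hwD) (not_le_of_gt hsw.lt')
    have : w ∈ D := by
      apply hD.mem_of_comp (w_mem_diff hsu hsw huw)
      intro e he
      exact Or.inr ((hDle e he).trans hsw.lt'.le)
    exact hwD this
  · have hES' : E ⊆ S \ UpY S u := fun e he =>
      ⟨hE.1 he, fun hY => hEY ⟨e, he, hY⟩⟩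
    have : E = D := hD.2.2 E hE.2.1 hDE hES'
    exact this ▸ hE

lemma MinIn_lift_up (hsu : covIn S s u) {z : P}
    (hz : MinIn (S \ UpY S u) z) : MinIn S z := by
  refine ⟨hz.1.1, ?_⟩
  intro y hyS hyz
  obtain ⟨c, hc, hyc⟩ := exists_covIn_between' hyS hz.1.1 hyz
  by_cases hcY : c ∈ UpY S u
  · exact hz.1.2 ⟨hz.1.1, hcY.2.trans hc.lt'.le⟩
  · exact hz.2 c ⟨hc.1, hcY⟩ hc.lt'

lemma MaxIn_lift_up (hsu : covIn S s u) (hsw : covIn S s w) (huw : u ≠ w)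
    (hNBl : ∀ a ∈ Rg S s u, ∀ c₁ c₂, covIn S c₁ a → covIn S c₂ a → c₁ = c₂)
    {z : P} (hz : MaxIn (S \ UpY S u) z) : MaxIn S z := by
  refine ⟨hz.1.1, ?_⟩
  intro y hyS hzy
  obtain ⟨c, hc, hcy⟩ := exists_covIn_between hz.1.1 hyS hzy
  by_cases hcY : c ∈ UpY S u
  · have hzs : z = s := UpY_boundary hsu hNBl z c (Or.inl hc) hcY hz.1.2
    exact hz.2 w (w_mem_diff hsu hsw huw) (hzs ▸ hsw.lt')
  · exact hz.2 c ⟨hc.2.1, hcY⟩ hc.lt'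

lemma final_chain_up (hsu : covIn S s u)
    (hNBu : ∀ a ∈ Rg S s u, ∀ c₁ c₂, covIn S a c₁ → covIn S a c₂ → c₁ = c₂)
    {Ci : Set P} (hCi : MCW (S \ UpY S u) Ci) (hsCi : s ∈ Ci) :
    MCW S (UpY S u ∪ {e ∈ Ci | e ≤ s}) ∧
      (UpY S u ∪ {e ∈ Ci | e ≤ s}) \ (S \ UpY S u) = UpY S u ∧
      (UpY S u ∪ {e ∈ Ci | e ≤ s}) ∩ (S \ UpY S u) ⊆ Ci := by
  set Y := UpY S u with hYdef
  set T : Set P := {e ∈ Ci | e ≤ s} with hTdef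
  have hTS' : T ⊆ S \ Y := fun e he => hCi.1 he.1
  have hYS : Y ⊆ S := fun y hy => hy.1
  have hchain : IsChain (· ≤ ·) (Y ∪ T) := by
    intro x hx y hy hxy
    rcases hx with hx | hx <;> rcases hy with hy | hy
    · exact UpY_chain hsu hNBu x hx y hy
    · exact Or.inr ((hy.2.trans hsu.lt'.le).trans hx.2)
    · exact Or.inl ((hx.2.trans hsu.lt'.le).trans hy.2)
    · exact (hCi.2.1.total hx.1 hy.1).imp id id
  have huF : u ∈ Y ∪ T := Or.inl ⟨hsu.2.1, le_rfl⟩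
  have hsF : s ∈ Y ∪ T := Or.inr ⟨hsCi, le_rfl⟩
  have hFS : Y ∪ T ⊆ S := Set.union_subset hYS (fun e he => (hTS' he).1)
  refine ⟨⟨hFS, hchain, ?_⟩, ?_, ?_⟩
  · intro C' hC' hFC' hC'S
    refine Set.Subset.antisymm ?_ hFC'
    intro z hz
    by_contra hzF
    have hzu : z ≤ u ∨ u ≤ z := by
      rcases hC'.total hz (hFC' huF) with h | h
      · exact Or.inl h
      · exact Or.inr h
    rcases hzu with h | h
    swap
    · exact hzF (Or.inl ⟨hC'S hz, h⟩)
    have hzu' : z < u := lt_of_le_of_ne h (fun he => hzF (Or.inl ⟨hC'S hz, he.ge⟩))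
    have hzs : z ≤ s := by
      rcases hC'.total hz (hFC' hsF) with h2 | h2
      · exact h2
      · rcases eq_or_lt_of_le h2 with heq | hlt
        · exact heq.ge
        · exact absurd hzu' (hsu.2.2.2 z (hC'S hz) hlt)
    have hzS' : z ∈ S \ Y := ⟨hC'S hz, fun hY =>
      absurd (hY.2.trans hzs) (not_le_of_gt hsu.lt')⟩
    have hzCi : z ∈ Ci := by
      apply hCi.mem_of_comp hzS'
      intro e he
      rcases hCi.2.1.total he hsCi with h2 | h2
      · have heF : e ∈ Y ∪ T := Or.inr ⟨he, h2⟩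
        rcases eq_or_ne e z with heq | hne
        · exact Or.inl heq.ge
        · exact (hC'.total (hFC' heF) hz).symm.imp id id
      · exact Or.inl (hzs.trans h2)
    exact hzF (Or.inr ⟨hzCi, hzs⟩)
  · apply Set.ext
    intro x
    constructor
    · rintro ⟨hx | hx, hx2⟩
      · exact hx
      · exact absurd (hTS' hx) hx2
    · intro hx
      exact ⟨Or.inl hx, fun hc => hc.2 hx⟩
  · rintro x ⟨hx | hx, hx2⟩
    · exact absurd hx hx2.2
    · exact hx.1

end UpCase2

section UpCase3

variable {P : Type*} [PartialOrder P] [Fintype P] {S : Set P} {s u : P}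

lemma ordConn_diff_up (hconv : S.OrdConnected) :
    (S \ UpY S u).OrdConnected := by
  constructor
  intro x hx y hy z hz
  refine ⟨hconv.out hx.1 hy.1 hz, fun hzY => hy.2 ⟨hy.1, hzY.2.trans hz.2⟩⟩

lemma UpY_Icc (hconv : S.OrdConnected) (hu : u ∈ S) {v : P} (hv : v ∈ UpY S u)
    (hvmax : ∀ z ∈ UpY S u, z ≤ v) : UpY S u = Set.Icc u v := by
  apply Set.ext
  intro z
  constructor
  · intro hz
    exact ⟨hz.2, hvmax z hz⟩
  · intro hz
    exact ⟨hconv.out hu hv.1 hz, hz.1⟩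

lemma conn_diff_up (hsu : covIn S s u)
    (hNBl : ∀ a ∈ Rg S s u, ∀ c₁ c₂, covIn S c₁ a → covIn S c₂ a → c₁ = c₂)
    (hconn : ∀ x ∈ S, ∀ y ∈ S, (GOn S).Reachable x y) :
    ∀ x ∈ S \ UpY S u, ∀ y ∈ S \ UpY S u, (GOn (S \ UpY S u)).Reachable x y := by
  intro x hx y hy
  obtain ⟨p⟩ := hconn x hx.1 y hy.1
  obtain ⟨q, hq⟩ := avoid_walk (UpY_boundary hsu hNBl) (fun h => absurd h.2 (not_le_of_gt hsu.lt')) p.length p le_rfl hx.2 hy.2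
  apply walk_avoid_reach (S' := S \ UpY S u) ?_ q hq
  intro a b hadj haY hbY
  have haS : a ∈ S := by
    rcases hadj with h | h
    · exact h.1
    · exact h.2.1
  have hbS : b ∈ S := by
    rcases hadj with h | h
    · exact h.2.1
    · exact h.1
  rcases hadj with h | h
  · exact Or.inl (covIn_diff' ⟨haS, haY⟩ ⟨hbS, hbY⟩ h)
  · exact Or.inr (covIn_diff' ⟨hbS, hbY⟩ ⟨haS, haY⟩ h)

end UpCase3

section DownCase

variable {P : Type*} [PartialOrder P] [Fintype P] {S : Set P} {s u w : P}

/-- The down-pendant region below `u`. -/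
def DownY (S : Set P) (u : P) : Set P := {x ∈ S | x ≤ u}

lemma down_sne (hus : covIn S u s) : s ≠ u := ne_of_gt hus.lt'

lemma RgDown_sub (hus : covIn S u s)
    (hNBu : ∀ a ∈ Rg S s u, ∀ c₁ c₂, covIn S a c₁ → covIn S a c₂ → c₁ = c₂) :
    Rg S s u ⊆ DownY S u := by
  have main : ∀ {a x : P} (p : (GOn S).Walk a x), s ∉ p.support →
      a ∈ Rg S s u → a ∈ S → a ≤ u → x ∈ S ∧ x ≤ u := by
    intro a x p
    induction p with
    | nil => intro _ _ haS hua; exact ⟨haS, hua⟩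
    | @cons a b x h q ih =>
      intro hsup haR haS hua
      have hbs : b ≠ s := by
        intro hbs
        apply hsup
        rw [SimpleGraph.Walk.support_cons]
        exact List.mem_cons_of_mem _ (hbs ▸ q.start_mem_support)
      have hbR : b ∈ Rg S s u := Rg.adj_mem haR h hbs
      have hsq : s ∉ q.support := fun hmem => hsup (by
        rw [SimpleGraph.Walk.support_cons]; exact List.mem_cons_of_mem _ hmem)
      have hub : b ∈ S ∧ b ≤ u := by
        rcases h with h | h
        · -- b is an upper cover of a
          rcases eq_or_lt_of_le hua with heq | hlt
          · have : b = s := hNBu a haR b s (heq ▸ h) (heq ▸ hus)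
            exact absurd this hbs
          · obtain ⟨c, hc, hcu⟩ := exists_covIn_between haS hus.1 hlt
            have : b = c := hNBu a haR b c h hc
            exact ⟨h.2.1, this ▸ hcu⟩
        · exact ⟨h.1, h.lt'.le.trans hua⟩
      exact ih hsq hbR hub.1 hub.2
  rintro x ⟨p, hp⟩
  exact main p hp (mem_Rg_self (down_sne hus)) hus.1 le_rfl

lemma RgDown_super (hus : covIn S u s) : DownY S u ⊆ Rg S s u := by
  intro x
  induction x using WellFoundedGT.induction with
  | ind x ih =>
    rintro ⟨hxS, hux⟩
    rcases eq_or_lt_of_le hux with heq | hlt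
    · rw [heq]; exact mem_Rg_self (down_sne hus)
    · obtain ⟨c, hc, hcu⟩ := exists_covIn_between hxS hus.1 hlt
      have hcR : c ∈ Rg S s u := ih c hc.lt' ⟨hc.2.1, hcu⟩
      have hxs : x ≠ s := by
        intro hxs
        exact absurd (hux.trans_lt hus.lt') (hxs ▸ lt_irrefl s)
      exact Rg.adj_mem hcR (Or.inr hc) hxs

lemma RgDown_eq (hus : covIn S u s)
    (hNBu : ∀ a ∈ Rg S s u, ∀ c₁ c₂, covIn S a c₁ → covIn S a c₂ → c₁ = c₂) :
    Rg S s u = DownY S u :=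
  le_antisymm (RgDown_sub hus hNBu) (RgDown_super hus)

lemma DownY_chain (hus : covIn S u s)
    (hNBl : ∀ a ∈ Rg S s u, ∀ c₁ c₂, covIn S c₁ a → covIn S c₂ a → c₁ = c₂) :
    ∀ x ∈ DownY S u, ∀ z ∈ DownY S u, x ≤ z ∨ z ≤ x := by
  intro x
  induction x using WellFoundedGT.induction with
  | ind x ih =>
    rintro ⟨hxS, hux⟩ z ⟨hzS, huz⟩
    rcases eq_or_lt_of_le hux with heq | hlt
    · exact Or.inr (heq ▸ huz)
    · obtain ⟨c, hc, hcu⟩ := exists_covIn_between hxS hus.1 hlt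
      rcases ih c hc.lt' ⟨hc.2.1, hcu⟩ z ⟨hzS, huz⟩ with h | h
      · exact Or.inl (hc.lt'.le.trans h)
      · rcases eq_or_lt_of_le h with heq | hlt2
        · exact Or.inl (heq ▸ hc.lt'.le)
        · obtain ⟨d, hd, hdz⟩ := exists_covIn_between' hzS hc.2.1 hlt2
          have : d = x := hNBl c (RgDown_super hus ⟨hc.2.1, hcu⟩) d x hd hc
          exact Or.inr (this ▸ hdz)

lemma DownY_bot (hus : covIn S u s)
    (hNBl : ∀ a ∈ Rg S s u, ∀ c₁ c₂, covIn S c₁ a → covIn S c₂ a → c₁ = c₂) :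
    ∃ v, v ∈ DownY S u ∧ (∀ z ∈ DownY S u, v ≤ z) ∧ MinIn S v := by
  obtain ⟨v, hv, hmin⟩ := Set.Finite.exists_minimal_wrt_port id (DownY S u) (Set.toFinite _)
    ⟨u, hus.1, le_rfl⟩
  have hvmin : ∀ z ∈ DownY S u, v ≤ z := by
    intro z hz
    rcases DownY_chain hus hNBl z hz v hv with h | h
    · exact le_of_eq (hmin z hz h)
    · exact h
  refine ⟨v, hv, hvmin, hv.1, ?_⟩
  intro y hyS hvy
  exact absurd (hvmin y ⟨hyS, hvy.le.trans hv.2⟩) (not_le_of_gt hvy)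

lemma DownY_boundary (hus : covIn S u s)
    (hNBu : ∀ a ∈ Rg S s u, ∀ c₁ c₂, covIn S a c₁ → covIn S a c₂ → c₁ = c₂) :
    ∀ a b : P, (GOn S).Adj a b → b ∈ DownY S u → a ∉ DownY S u → a = s := by
  intro a b hadj hbY haY
  rcases hadj with h | h
  · exact absurd ⟨h.1, h.lt'.le.trans hbY.2⟩ haY
  · rcases eq_or_lt_of_le hbY.2 with heq | hlt
    · exact hNBu u (mem_Rg_self (down_sne hus)) a s (heq ▸ h) hus
    · obtain ⟨c, hc, hcu⟩ := exists_covIn_between hbY.1 hus.1 hlt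
      have : a = c := hNBu b (RgDown_super hus hbY) a c h hc
      exact absurd ⟨h.2.1, this ▸ hcu⟩ haY

lemma covIn_diff_down (hus : covIn S u s) {a b : P} (h : covIn (S \ DownY S u) a b) :
    covIn S a b := by
  refine ⟨h.1.1, h.2.1.1, h.2.2.1, ?_⟩
  intro z hzS haz hzb
  by_cases hzY : z ∈ DownY S u
  · exact absurd ⟨h.1.1, haz.le.trans hzY.2⟩ h.1.2
  · exact h.2.2.2 z ⟨hzS, hzY⟩ haz hzb

lemma s_mem_diff_down (hus : covIn S u s) : s ∈ S \ DownY S u :=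
  ⟨hus.2.1, fun hs => absurd hs.2 (not_le_of_gt hus.lt')⟩

lemma w_mem_diff_down (hus : covIn S u s) (hws : covIn S w s) (huw : u ≠ w) :
    w ∈ S \ DownY S u := by
  refine ⟨hws.1, fun hw => ?_⟩
  rcases eq_or_lt_of_le hw.2 with heq | hlt
  · exact huw heq.symm
  · exact hws.2.2.2 u hus.1 hlt hus.lt'

lemma MCW_lift_down (hus : covIn S u s) (hws : covIn S w s) (huw : u ≠ w)
    (hNBu : ∀ a ∈ Rg S s u, ∀ c₁ c₂, covIn S a c₁ → covIn S a c₂ → c₁ = c₂)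
    {D : Set P} (hD : MCW (S \ DownY S u) D) : MCW S D := by
  obtain ⟨E, hE, hDE⟩ := exists_MCW_superset (hD.1.trans (Set.diff_subset)) hD.2.1
  by_cases hEY : (E ∩ DownY S u).Nonempty
  · exfalso
    obtain ⟨x, hxE, hxY⟩ := hEY
    have key : ∀ x : P, x ∈ E → x ∈ DownY S u → s ∈ E ∧ u ∈ E := by
      intro x
      induction x using WellFoundedGT.induction with
      | ind x ih =>
        intro hxE hxY
        obtain ⟨p, hpE, hpx⟩ := hE.succ_cov hxE hus.2.1 (hxY.2.trans_lt hus.lt')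
        rcases eq_or_lt_of_le hxY.2 with heq | hlt
        · have : p = s := hNBu u (mem_Rg_self (down_sne hus)) p s (heq ▸ hpx) hus
          exact ⟨this ▸ hpE, heq ▸ hxE⟩
        · obtain ⟨c, hc, hcu⟩ := exists_covIn_between hxY.1 hus.1 hlt
          have hpc : p = c := hNBu x (RgDown_super hus hxY) p c hpx hc
          exact ih p (hpx.lt') hpE (hpc ▸ ⟨hc.2.1, hcu⟩)
    obtain ⟨hsE, huE⟩ := key x hxE hxY
    have hDle : ∀ d ∈ D, s ≤ d := by
      intro d hdD
      have hdE := hDE hdD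
      have hdY : d ∉ DownY S u := (hD.1 hdD).2
      rcases hE.2.1.total hdE huE with h | h
      · exact absurd ⟨hE.1 hdE, h⟩ hdY
      · have hdu : u < d := lt_of_le_of_ne h (fun hdu => hdY ⟨hE.1 hdE, hdu.ge⟩)
        rcases hE.2.1.total hdE hsE with h2 | h2
        · rcases eq_or_lt_of_le h2 with heq | hlt
          · exact heq.ge
          · exact absurd hlt (hus.2.2.2 d (hE.1 hdE) hdu)
        · exact h2
    have hwD : w ∉ D := fun hwD => absurd (hDle w hwD) (not_le_of_gt hws.lt')
    have : w ∈ D := by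
      apply hD.mem_of_comp (w_mem_diff_down hus hws huw)
      intro e he
      exact Or.inl (hws.lt'.le.trans (hDle e he))
    exact hwD this
  · have hES' : E ⊆ S \ DownY S u := fun e he =>
      ⟨hE.1 he, fun hY => hEY ⟨e, he, hY⟩⟩
    have : E = D := hD.2.2 E hE.2.1 hDE hES'
    exact this ▸ hE

lemma MaxIn_lift_down (hus : covIn S u s) {z : P}
    (hz : MaxIn (S \ DownY S u) z) : MaxIn S z := by
  refine ⟨hz.1.1, ?_⟩
  intro y hyS hzy
  obtain ⟨c, hc, hcy⟩ := exists_covIn_between hz.1.1 hyS hzy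
  by_cases hcY : c ∈ DownY S u
  · exact hz.1.2 ⟨hz.1.1, hc.lt'.le.trans hcY.2⟩
  · exact hz.2 c ⟨hc.2.1, hcY⟩ hc.lt'

lemma MinIn_lift_down (hus : covIn S u s) (hws : covIn S w s) (huw : u ≠ w)
    (hNBu : ∀ a ∈ Rg S s u, ∀ c₁ c₂, covIn S a c₁ → covIn S a c₂ → c₁ = c₂)
    {z : P} (hz : MinIn (S \ DownY S u) z) : MinIn S z := by
  refine ⟨hz.1.1, ?_⟩
  intro y hyS hzy
  obtain ⟨c, hc, hcy⟩ := exists_covIn_between' hyS hz.1.1 hzy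
  by_cases hcY : c ∈ DownY S u
  · have hzs : z = s := DownY_boundary hus hNBu z c (Or.inr hc) hcY hz.1.2
    exact hz.2 w (w_mem_diff_down hus hws huw) (hzs ▸ hws.lt')
  · exact hz.2 c ⟨hc.1, hcY⟩ hc.lt'

lemma final_chain_down (hus : covIn S u s)
    (hNBl : ∀ a ∈ Rg S s u, ∀ c₁ c₂, covIn S c₁ a → covIn S c₂ a → c₁ = c₂)
    {Ci : Set P} (hCi : MCW (S \ DownY S u) Ci) (hsCi : s ∈ Ci) :
    MCW S (DownY S u ∪ {e ∈ Ci | s ≤ e}) ∧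
      (DownY S u ∪ {e ∈ Ci | s ≤ e}) \ (S \ DownY S u) = DownY S u ∧
      (DownY S u ∪ {e ∈ Ci | s ≤ e}) ∩ (S \ DownY S u) ⊆ Ci := by
  set Y := DownY S u with hYdef
  set T : Set P := {e ∈ Ci | s ≤ e} with hTdef
  have hTS' : T ⊆ S \ Y := fun e he => hCi.1 he.1
  have hYS : Y ⊆ S := fun y hy => hy.1
  have hchain : IsChain (· ≤ ·) (Y ∪ T) := by
    intro x hx y hy hxy
    rcases hx with hx | hx <;> rcases hy with hy | hy
    · exact DownY_chain hus hNBl x hx y hy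
    · exact Or.inl (hx.2.trans (hus.lt'.le.trans hy.2))
    · exact Or.inr (hy.2.trans (hus.lt'.le.trans hx.2))
    · exact (hCi.2.1.total hx.1 hy.1).imp id id
  have huF : u ∈ Y ∪ T := Or.inl ⟨hus.1, le_rfl⟩
  have hsF : s ∈ Y ∪ T := Or.inr ⟨hsCi, le_rfl⟩
  have hFS : Y ∪ T ⊆ S := Set.union_subset hYS (fun e he => (hTS' he).1)
  refine ⟨⟨hFS, hchain, ?_⟩, ?_, ?_⟩
  · intro C' hC' hFC' hC'S
    refine Set.Subset.antisymm ?_ hFC'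
    intro z hz
    by_contra hzF
    have hzu : z ≤ u ∨ u ≤ z := by
      rcases hC'.total hz (hFC' huF) with h | h
      · exact Or.inl h
      · exact Or.inr h
    rcases hzu with h | h
    · exact hzF (Or.inl ⟨hC'S hz, h⟩)
    have hzu' : u < z := lt_of_le_of_ne h (fun he => hzF (Or.inl ⟨hC'S hz, he.ge⟩))
    have hzs : s ≤ z := by
      rcases hC'.total hz (hFC' hsF) with h2 | h2
      · rcases eq_or_lt_of_le h2 with heq | hlt
        · exact heq.ge
        · exact absurd hlt (hus.2.2.2 z (hC'S hz) hzu')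
      · exact h2
    have hzS' : z ∈ S \ Y := ⟨hC'S hz, fun hY =>
      absurd (hzs.trans hY.2) (not_le_of_gt hus.lt')⟩
    have hzCi : z ∈ Ci := by
      apply hCi.mem_of_comp hzS'
      intro e he
      rcases hCi.2.1.total he hsCi with h2 | h2
      · exact Or.inr (h2.trans hzs)
      · have heF : e ∈ Y ∪ T := Or.inr ⟨he, h2⟩
        rcases eq_or_ne e z with heq | hne
        · exact Or.inl heq.ge
        · exact (hC'.total (hFC' heF) hz).symm.imp id id
    exact hzF (Or.inr ⟨hzCi, hzs⟩)
  · apply Set.ext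
    intro x
    constructor
    · rintro ⟨hx | hx, hx2⟩
      · exact hx
      · exact absurd (hTS' hx) hx2
    · intro hx
      exact ⟨Or.inl hx, fun hc => hc.2 hx⟩
  · rintro x ⟨hx | hx, hx2⟩
    · exact absurd hx hx2.2
    · exact hx.1

lemma ordConn_diff_down (hconv : S.OrdConnected) :
    (S \ DownY S u).OrdConnected := by
  constructor
  intro x hx y hy z hz
  refine ⟨hconv.out hx.1 hy.1 hz, fun hzY => hx.2 ⟨hx.1, hz.1.trans hzY.2⟩⟩

lemma DownY_Icc (hconv : S.OrdConnected) (hu : u ∈ S) {v : P} (hv : v ∈ DownY S u)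
    (hvmin : ∀ z ∈ DownY S u, v ≤ z) : DownY S u = Set.Icc v u := by
  apply Set.ext
  intro z
  constructor
  · intro hz
    exact ⟨hvmin z hz, hz.2⟩
  · intro hz
    exact ⟨hconv.out hv.1 hu hz, hz.2⟩

lemma conn_diff_down (hus : covIn S u s)
    (hNBu : ∀ a ∈ Rg S s u, ∀ c₁ c₂, covIn S a c₁ → covIn S a c₂ → c₁ = c₂)
    (hconn : ∀ x ∈ S, ∀ y ∈ S, (GOn S).Reachable x y) :
    ∀ x ∈ S \ DownY S u, ∀ y ∈ S \ DownY S u, (GOn (S \ DownY S u)).Reachable x y := by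
  intro x hx y hy
  obtain ⟨p⟩ := hconn x hx.1 y hy.1
  obtain ⟨q, hq⟩ := avoid_walk (DownY_boundary hus hNBu)
    (fun h => absurd h.2 (not_le_of_gt hus.lt')) p.length p le_rfl hx.2 hy.2
  apply walk_avoid_reach (S' := S \ DownY S u) ?_ q hq
  intro a b hadj haY hbY
  have haS : a ∈ S := by
    rcases hadj with h | h
    · exact h.1
    · exact h.2.1
  have hbS : b ∈ S := by
    rcases hadj with h | h
    · exact h.2.1
    · exact h.1
  rcases hadj with h | h
  · exact Or.inl (covIn_diff' ⟨haS, haY⟩ ⟨hbS, hbY⟩ h)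
  · exact Or.inr (covIn_diff' ⟨hbS, hbY⟩ ⟨haS, haY⟩ h)

end DownCase

section Branch

variable {P : Type*} [PartialOrder P] [Fintype P] {S : Set P}

lemma walk_up (hNB : ∀ a ∈ S, (∀ c₁ c₂, covIn S a c₁ → covIn S a c₂ → c₁ = c₂) ∧
    (∀ c₁ c₂, covIn S c₁ a → covIn S c₂ a → c₁ = c₂)) :
    ∀ {x y : P} (p : (GOn S).Walk x y), p.IsPath →
      ∀ z, covIn S z x → z ∉ p.support → x ≤ y := by
  intro x y p
  induction p with
  | nil => intro _ _ _ _; exact le_rfl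
  | @cons x b y h q ih =>
    intro hp z hzx hzsup
    have hq : q.IsPath := hp.of_cons
    have hxq : x ∉ q.support := (SimpleGraph.Walk.cons_isPath_iff h q).mp hp |>.2
    rcases h with h | h
    · have hby : b ≤ y := ih hq x h hxq
      exact h.lt'.le.trans hby
    · -- b and z are both lower covers of x
      have hbz : b = z := (hNB x h.2.1).2 b z h hzx
      have : z ∈ (SimpleGraph.Walk.cons (Or.inr h : (GOn S).Adj x b) q).support := by
        show z ∈ x :: q.support
        exact List.mem_cons_of_mem _ (hbz ▸ q.start_mem_support)
      exact absurd this hzsup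

lemma walk_down (hNB : ∀ a ∈ S, (∀ c₁ c₂, covIn S a c₁ → covIn S a c₂ → c₁ = c₂) ∧
    (∀ c₁ c₂, covIn S c₁ a → covIn S c₂ a → c₁ = c₂)) :
    ∀ {x y : P} (p : (GOn S).Walk x y), p.IsPath →
      ∀ z, covIn S x z → z ∉ p.support → y ≤ x := by
  intro x y p
  induction p with
  | nil => intro _ _ _ _; exact le_rfl
  | @cons x b y h q ih =>
    intro hp z hzx hzsup
    have hq : q.IsPath := hp.of_cons
    have hxq : x ∉ q.support := (SimpleGraph.Walk.cons_isPath_iff h q).mp hp |>.2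
    rcases h with h | h
    · have hbz : b = z := (hNB x h.1).1 b z h hzx
      have : z ∈ (SimpleGraph.Walk.cons (Or.inl h : (GOn S).Adj x b) q).support := by
        show z ∈ x :: q.support
        exact List.mem_cons_of_mem _ (hbz ▸ q.start_mem_support)
      exact absurd this hzsup
    · have hby : y ≤ b := ih hq x h hxq
      exact hby.trans h.lt'.le

lemma exists_branch (hconn : ∀ x ∈ S, ∀ y ∈ S, (GOn S).Reachable x y)
    (hnc : ¬ IsChain (· ≤ ·) S) :
    ∃ a c₁ c₂ : P, c₁ ≠ c₂ ∧
      ((covIn S a c₁ ∧ covIn S a c₂) ∨ (covIn S c₁ a ∧ covIn S c₂ a)) := by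
  classical
  by_contra hno
  push_neg at hno
  apply hnc
  have hNB : ∀ a ∈ S, (∀ c₁ c₂, covIn S a c₁ → covIn S a c₂ → c₁ = c₂) ∧
      (∀ c₁ c₂, covIn S c₁ a → covIn S c₂ a → c₁ = c₂) := by
    intro a _
    constructor
    · intro c₁ c₂ h1 h2
      by_contra hne
      exact (hno a c₁ c₂ hne).1 h1 h2
    · intro c₁ c₂ h1 h2
      by_contra hne
      exact (hno a c₁ c₂ hne).2 h1 h2
  intro x hx y hy hxy
  obtain ⟨p0⟩ := hconn x hx y hy
  obtain ⟨q, hpath⟩ := p0.toPath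
  cases q with
  | nil => exact absurd rfl hxy
  | cons h r =>
    rename_i b
    have hr : r.IsPath := hpath.of_cons
    have hxr : x ∉ r.support := ((SimpleGraph.Walk.cons_isPath_iff h r).mp hpath).2
    rcases h with h | h
    · exact Or.inl (h.lt'.le.trans (walk_up hNB r hr x h hxr))
    · exact Or.inr ((walk_down hNB r hr x h hxr).trans h.lt'.le)

lemma exists_good_pair (hacyc : (GOn S).IsAcyclic)
    (hBP : ∃ a c₁ c₂ : P, c₁ ≠ c₂ ∧
      ((covIn S a c₁ ∧ covIn S a c₂) ∨ (covIn S c₁ a ∧ covIn S c₂ a))) :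
    ∃ s u w : P, u ≠ w ∧
      ((covIn S s u ∧ covIn S s w) ∨ (covIn S u s ∧ covIn S w s)) ∧
      (∀ a ∈ Rg S s u, ∀ c₁ c₂, covIn S a c₁ → covIn S a c₂ → c₁ = c₂) ∧
      (∀ a ∈ Rg S s u, ∀ c₁ c₂, covIn S c₁ a → covIn S c₂ a → c₁ = c₂) := by
  classical
  set BP : Set (P × P) := {q | ∃ c', c' ≠ q.2 ∧
    ((covIn S q.1 q.2 ∧ covIn S q.1 c') ∨ (covIn S q.2 q.1 ∧ covIn S c' q.1))} with hBPdef
  have hBPne : BP.Nonempty := by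
    obtain ⟨a, c₁, c₂, hne, h⟩ := hBP
    exact ⟨(a, c₁), c₂, hne.symm, h.imp (fun h => ⟨h.1, h.2⟩) (fun h => ⟨h.1, h.2⟩)⟩
  obtain ⟨⟨s, u⟩, hsu, hmin⟩ := Set.exists_min_image BP
    (fun q => (Rg S q.1 q.2).ncard) (Set.toFinite _) hBPne
  obtain ⟨w, hwu, hdir⟩ := hsu
  have hadj_su : (GOn S).Adj s u := by
    rcases hdir with h | h
    · exact Or.inl h.1
    · exact Or.inr h.1
  -- no branch vertex inside the region
  have hNB : ∀ a ∈ Rg S s u, ∀ c₁ c₂ : P, c₁ ≠ c₂ →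
      ¬((covIn S a c₁ ∧ covIn S a c₂) ∨ (covIn S c₁ a ∧ covIn S c₂ a)) := by
    intro a haR c₁ c₂ hne hcov
    have has : a ≠ s := fun h => not_mem_Rg_self (h ▸ haR)
    have h1 : (GOn S).Adj a c₁ := by
      rcases hcov with h | h
      · exact Or.inl h.1
      · exact Or.inr h.1
    have h2 : (GOn S).Adj a c₂ := by
      rcases hcov with h | h
      · exact Or.inl h.2
      · exact Or.inr h.2
    obtain ⟨c, hc12, hcs, hsR⟩ := Rg.select hacyc h1 h2 hne has
    obtain ⟨hsub, hanotin⟩ := Rg.shrink haR (by rcases hc12 with rfl | rfl <;> assumption)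
      hcs hsR
    have hacBP : (a, c) ∈ BP := by
      rcases hc12 with rfl | rfl
      · refine ⟨c₂, hne.symm, ?_⟩
        rcases hcov with h | h
        · exact Or.inl ⟨h.1, h.2⟩
        · exact Or.inr ⟨h.1, h.2⟩
      · refine ⟨c₁, hne, ?_⟩
        rcases hcov with h | h
        · exact Or.inl ⟨h.2, h.1⟩
        · exact Or.inr ⟨h.2, h.1⟩
    have hss : Rg S a c ⊂ Rg S s u := ⟨hsub, fun hsup => hanotin (hsup haR)⟩
    have := Set.ncard_lt_ncard hss (Set.toFinite _)
    exact absurd (hmin (a, c) hacBP) (not_le_of_gt this)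
  refine ⟨s, u, w, hwu.symm, hdir, ?_, ?_⟩
  · intro a haR c₁ c₂ h1 h2
    by_contra hne
    exact hNB a haR c₁ c₂ hne (Or.inl ⟨h1, h2⟩)
  · intro a haR c₁ c₂ h1 h2
    by_contra hne
    exact hNB a haR c₁ c₂ hne (Or.inr ⟨h1, h2⟩)

end Branch

section Assemble

variable {P : Type*} [PartialOrder P] [Fintype P]

/-- The desired chain-cover package, relative to a subset `S`. -/
def Pkg (k : ℕ) (S : Set P) : Prop :=
  ∃ ℓ : ℕ, 1 ≤ ℓ ∧ ∃ C : ℕ → Set P,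
    (∀ j < ℓ, MCW S (C j)) ∧
    (∀ j < ℓ, ∀ D, MCW (⋃ i, ⋃ (_ : i ≤ j), C i) D → D.ncard = k) ∧
    (⋃ i, ⋃ (_ : i < ℓ), C i) = S ∧
    (∀ j, 0 < j → j < ℓ →
      (C j \ ⋃ i, ⋃ (_ : i < j), C i).Nonempty ∧
      (∃ x y : P, x ≤ y ∧ C j \ (⋃ i, ⋃ (_ : i < j), C i) = Set.Icc x y) ∧
      (∃ z ∈ C j \ ⋃ i, ⋃ (_ : i < j), C i, MinIn S z ∨ MaxIn S z)) ∧
    (∀ j, 0 < j → j < ℓ → ∃ i < j, (C j ∩ ⋃ i', ⋃ (_ : i' < j), C i') ⊆ C i)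

lemma assemble {k : ℕ} {S Y : Set P}
    (hgrad : ∀ C, MCW S C → C.ncard = k)
    (hYS : Y ⊆ S) (hYne : Y.Nonempty)
    (hIcc : ∃ x y : P, x ≤ y ∧ Y = Set.Icc x y)
    (hzY : ∃ z ∈ Y, MinIn S z ∨ MaxIn S z)
    (hminf : ∀ z, MinIn (S \ Y) z → MinIn S z)
    (hmaxf : ∀ z, MaxIn (S \ Y) z → MaxIn S z)
    (hlift : ∀ D, MCW (S \ Y) D → MCW S D)
    {p : P} (hp : p ∈ S \ Y)
    (hfin : ∀ Ci, MCW (S \ Y) Ci → p ∈ Ci →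
      ∃ F, MCW S F ∧ F \ (S \ Y) = Y ∧ F ∩ (S \ Y) ⊆ Ci)
    (prev : Pkg k (S \ Y)) : Pkg k S := by
  classical
  obtain ⟨ℓ', hℓ', C', hC1, hC2, hC3, hC4, hC5⟩ := prev
  -- the index of a chain containing p
  have hpU : p ∈ ⋃ i, ⋃ (_ : i < ℓ'), C' i := hC3 ▸ hp
  obtain ⟨i₀, hi₀, hpi₀⟩ := Set.mem_iUnion₂.mp hpU
  obtain ⟨F, hF, hFY, hFCi⟩ := hfin (C' i₀) (hC1 i₀ hi₀) hpi₀
  set C : ℕ → Set P := fun j => if j = ℓ' then F else C' j with hCdef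
  have hCeq : ∀ i < ℓ', C i = C' i := by
    intro i hi
    simp only [hCdef, if_neg (Nat.ne_of_lt hi)]
  have hCl : C ℓ' = F := by simp [hCdef]
  have hUlt : ∀ j ≤ ℓ', (⋃ i, ⋃ (_ : i < j), C i) = (⋃ i, ⋃ (_ : i < j), C' i) := by
    intro j hj
    apply Set.iUnion₂_congr
    intro i hi
    exact hCeq i (lt_of_lt_of_le hi hj)
  have hUle : ∀ j < ℓ', (⋃ i, ⋃ (_ : i ≤ j), C i) = (⋃ i, ⋃ (_ : i ≤ j), C' i) := by
    intro j hj
    apply Set.iUnion₂_congr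
    intro i hi
    exact hCeq i (lt_of_le_of_lt hi hj)
  have hUfull : (⋃ i, ⋃ (_ : i < ℓ'), C i) = S \ Y := by
    rw [hUlt ℓ' le_rfl]; exact hC3
  have hStot : (⋃ i, ⋃ (_ : i < ℓ' + 1), C i) = S := by
    apply Set.Subset.antisymm
    · intro x hx
      obtain ⟨i, hi, hxi⟩ := Set.mem_iUnion₂.mp hx
      rcases Nat.lt_succ_iff_lt_or_eq.mp hi with hi | hie
      · exact ((hC1 i hi).1 ((hCeq i hi) ▸ hxi)).1
      · rw [hie, hCl] at hxi
        exact hF.1 hxi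
    · intro x hx
      by_cases hxY : x ∈ Y
      · refine Set.mem_iUnion₂.mpr ⟨ℓ', Nat.lt_succ_self _, ?_⟩
        rw [hCl]
        have hx2 : x ∈ F \ (S \ Y) := by rw [hFY]; exact hxY
        exact hx2.1
      · have : x ∈ ⋃ i, ⋃ (_ : i < ℓ'), C i := hUfull ▸ ⟨hx, hxY⟩
        obtain ⟨i, hi, hxi⟩ := Set.mem_iUnion₂.mp this
        exact Set.mem_iUnion₂.mpr ⟨i, Nat.lt_succ_of_lt hi, hxi⟩
  refine ⟨ℓ' + 1, le_trans hℓ' (Nat.le_succ _), C, ?_, ?_, hStot, ?_, ?_⟩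
  · -- each C j is MCW S
    intro j hj
    rcases Nat.lt_succ_iff_lt_or_eq.mp hj with hj | hje
    · rw [hCeq j hj]
      exact hlift _ (hC1 j hj)
    · rw [hje, hCl]; exact hF
  · -- graded partial unions
    intro j hj D hD
    rcases Nat.lt_succ_iff_lt_or_eq.mp hj with hj | hje
    · rw [hUle j hj] at hD
      exact hC2 j hj D hD
    · have hle_lt : (⋃ i, ⋃ (_ : i ≤ ℓ'), C i) = (⋃ i, ⋃ (_ : i < ℓ' + 1), C i) := by
        ext x
        simp [Nat.lt_succ_iff]
      rw [hje, hle_lt, hStot] at hD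
      exact hgrad D hD
  · -- interval conditions
    intro j hj0 hj
    rcases Nat.lt_succ_iff_lt_or_eq.mp hj with hj | hje
    · have h4 := hC4 j hj0 hj
      rw [hCeq j hj, hUlt j hj.le]
      refine ⟨h4.1, h4.2.1, ?_⟩
      obtain ⟨z, hz, hz2⟩ := h4.2.2
      exact ⟨z, hz, hz2.imp (hminf z) (hmaxf z)⟩
    · have hdiff : C ℓ' \ (⋃ i, ⋃ (_ : i < ℓ'), C i) = Y := by
        rw [hCl, hUfull]; exact hFY
      rw [hje, hdiff]
      exact ⟨hYne, hIcc, hzY⟩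
  · -- overlap inside a single earlier chain
    intro j hj0 hj
    rcases Nat.lt_succ_iff_lt_or_eq.mp hj with hj | hje
    · obtain ⟨i, hi, hsub⟩ := hC5 j hj0 hj
      refine ⟨i, hi, ?_⟩
      rw [hUlt j hj.le, hCeq j hj, hCeq i (hi.trans hj)]
      exact hsub
    · refine ⟨i₀, by rw [hje]; exact hi₀, ?_⟩
      rw [hje, hCl, hUfull, hCeq i₀ hi₀]
      exact hFCi

end Assemble

section AuxMain

variable {P : Type*} [PartialOrder P] [Fintype P]

lemma pkg_of_chain {k : ℕ} {S : Set P} (hchain : IsChain (· ≤ ·) S)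
    (hgrad : ∀ C, MCW S C → C.ncard = k) : Pkg k S := by
  have hU1 : ∀ j : ℕ, (⋃ i, ⋃ (_ : i ≤ j), (fun _ : ℕ => S) i) = S := by
    intro j
    apply Set.Subset.antisymm (Set.iUnion₂_subset fun i _ => Set.Subset.rfl)
    exact fun x hx => Set.mem_iUnion₂.mpr ⟨0, Nat.zero_le _, hx⟩
  have hU2 : (⋃ i, ⋃ (_ : i < 1), (fun _ : ℕ => S) i) = S := by
    apply Set.Subset.antisymm (Set.iUnion₂_subset fun i _ => Set.Subset.rfl)
    exact fun x hx => Set.mem_iUnion₂.mpr ⟨0, Nat.zero_lt_one, hx⟩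
  refine ⟨1, le_rfl, fun _ => S, ?_, ?_, hU2, ?_, ?_⟩
  · intro j _
    exact ⟨Set.Subset.rfl, hchain, fun C' _ h2 h3 => Set.Subset.antisymm h3 h2⟩
  · intro j _ D hD
    rw [hU1 j] at hD
    exact hgrad D hD
  · intro j hj0 hj1
    omega
  · intro j hj0 hj1
    omega

theorem aux (k : ℕ) : ∀ (n : ℕ) (S : Set P), S.ncard ≤ n → S.Nonempty →
    S.OrdConnected →
    (∀ x ∈ S, ∀ y ∈ S, (GOn S).Reachable x y) → (GOn S).IsAcyclic →
    (∀ C, MCW S C → C.ncard = k) → Pkg k S := by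
  intro n
  induction n with
  | zero =>
    intro S hn hne _ _ _ _
    rw [Nat.le_zero, Set.ncard_eq_zero (Set.toFinite S)] at hn
    exact absurd hn (Set.nonempty_iff_ne_empty.mp hne)
  | succ n ih =>
    intro S hn hne hconv hconn hacyc hgrad
    by_cases hchain : IsChain (· ≤ ·) S
    · exact pkg_of_chain hchain hgrad
    · obtain ⟨s, u, w, huw, hdir, hNBu, hNBl⟩ :=
        exists_good_pair hacyc (exists_branch hconn hchain)
      rcases hdir with ⟨hsu, hsw⟩ | ⟨hus, hws⟩
      · -- up case: remove UpY S u
        set Y := UpY S u with hYdef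
        have hcard : (S \ Y).ncard ≤ n := by
          have hss : S \ Y ⊂ S := (Set.ssubset_iff_of_subset Set.diff_subset).mpr
            ⟨u, hsu.2.1, fun h => h.2 ⟨hsu.2.1, le_rfl⟩⟩
          have := Set.ncard_lt_ncard hss (Set.toFinite S)
          omega
        have hgrad' : ∀ C, MCW (S \ Y) C → C.ncard = k :=
          fun C hC => hgrad C (MCW_lift_up hsu hsw huw hNBl hC)
        have prev := ih (S \ Y) hcard ⟨s, s_mem_diff hsu⟩ (ordConn_diff_up hconv)
          (conn_diff_up hsu hNBl hconn)
          (IsAcyclic.anti (GOn_diff_le hsu) hacyc) hgrad'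
        obtain ⟨v, hvY, hvmax, hvMax⟩ := UpY_top hsu hNBu
        refine assemble (Y := Y) hgrad (fun y hy => hy.1) ⟨u, ⟨hsu.2.1, le_rfl⟩⟩
          ⟨u, v, hvY.2, UpY_Icc hconv hsu.2.1 hvY hvmax⟩
          ⟨v, hvY, Or.inr hvMax⟩
          (fun z => MinIn_lift_up hsu)
          (fun z => MaxIn_lift_up hsu hsw huw hNBl)
          (fun D => MCW_lift_up hsu hsw huw hNBl)
          (s_mem_diff hsu) ?_ prev
        intro Ci hCi hsCi
        obtain ⟨h1, h2, h3⟩ := final_chain_up hsu hNBu hCi hsCi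
        exact ⟨_, h1, h2, h3⟩
      · -- down case: remove DownY S u
        set Y := DownY S u with hYdef
        have hcard : (S \ Y).ncard ≤ n := by
          have hss : S \ Y ⊂ S := (Set.ssubset_iff_of_subset Set.diff_subset).mpr
            ⟨u, hus.1, fun h => h.2 ⟨hus.1, le_rfl⟩⟩
          have := Set.ncard_lt_ncard hss (Set.toFinite S)
          omega
        have hle : GOn (S \ Y) ≤ GOn S := by
          intro a b hadj
          exact hadj.imp (covIn_diff_down hus) (covIn_diff_down hus)
        have hgrad' : ∀ C, MCW (S \ Y) C → C.ncard = k :=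
          fun C hC => hgrad C (MCW_lift_down hus hws huw hNBu hC)
        have prev := ih (S \ Y) hcard ⟨s, s_mem_diff_down hus⟩ (ordConn_diff_down hconv)
          (conn_diff_down hus hNBu hconn)
          (IsAcyclic.anti hle hacyc) hgrad'
        obtain ⟨v, hvY, hvmin, hvMin⟩ := DownY_bot hus hNBl
        refine assemble (Y := Y) hgrad (fun y hy => hy.1) ⟨u, ⟨hus.1, le_rfl⟩⟩
          ⟨v, u, hvY.2, DownY_Icc hconv hus.1 hvY hvmin⟩
          ⟨v, hvY, Or.inl hvMin⟩
          (fun z => MinIn_lift_down hus hws huw hNBu)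
          (fun z => MaxIn_lift_down hus)
          (fun D => MCW_lift_down hus hws huw hNBu)
          (s_mem_diff_down hus) ?_ prev
        intro Ci hCi hsCi
        obtain ⟨h1, h2, h3⟩ := final_chain_down hus hNBl hCi hsCi
        exact ⟨_, h1, h2, h3⟩

end AuxMain

/-- A graded tree poset of height `k` (every maximal chain has exactly `k`
elements and the Hasse diagram is a tree) admits a graded chain cover: maximal
chains `C₀, …, C_{ℓ-1}` such that (i) each partial union is graded of height `k`
(as an induced subposet) and the total union is `P`; (ii) for `j ≥ 1`,
`I_j = C_j \ (C₀ ∪ ⋯ ∪ C_{j-1})` is a nonempty interval containing a minimal or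
maximal element of `P`; (iii) for `j ≥ 1`, `C_j \ I_j ⊆ C_i` for some `i < j`. -/
theorem stmt11 {P : Type*} [PartialOrder P] [Fintype P] (k : ℕ)
    (htree : (hasse P).IsTree)
    (hgraded : ∀ C : Set P, IsMaxChain (· ≤ ·) C → C.ncard = k) :
    ∃ ℓ : ℕ, 1 ≤ ℓ ∧ ∃ C : ℕ → Set P,
      (∀ j < ℓ, IsMaxChain (· ≤ ·) (C j)) ∧
      (∀ j < ℓ, ∀ D : Set (↥(⋃ i ≤ j, C i)),
        IsMaxChain (· ≤ ·) D → D.ncard = k) ∧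
      (⋃ i < ℓ, C i) = Set.univ ∧
      (∀ j, 0 < j → j < ℓ →
        (C j \ ⋃ i < j, C i).Nonempty ∧
        (∃ x y : P, x ≤ y ∧ C j \ (⋃ i < j, C i) = Set.Icc x y) ∧
        (∃ z ∈ C j \ ⋃ i < j, C i, IsMin z ∨ IsMax z)) ∧
      (∀ j, 0 < j → j < ℓ → ∃ i < j, (C j ∩ ⋃ i' < j, C i') ⊆ C i) := by
  classical
  have hG : GOn (Set.univ : Set P) = hasse P := by
    ext a b
    constructor
    · intro h
      rcases h with h | h
      · exact Or.inl ⟨h.2.2.1, fun c hc => h.2.2.2 c trivial hc⟩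
      · exact Or.inr ⟨h.2.2.1, fun c hc => h.2.2.2 c trivial hc⟩
    · intro h
      rcases h with h | h
      · exact Or.inl ⟨trivial, trivial, h.lt, fun z _ hz => h.2 hz⟩
      · exact Or.inr ⟨trivial, trivial, h.lt, fun z _ hz => h.2 hz⟩
  have hconn0 : (hasse P).Connected := htree.isConnected
  have : Nonempty P := hconn0.nonempty
  have hconn : ∀ x ∈ (Set.univ : Set P), ∀ y ∈ (Set.univ : Set P),
      (GOn (Set.univ : Set P)).Reachable x y := by
    intro x _ y _
    rw [hG]
    exact hconn0.preconnected x y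
  have hacyc : (GOn (Set.univ : Set P)).IsAcyclic := by
    rw [hG]; exact htree.IsAcyclic
  have hgrad : ∀ C : Set P, MCW Set.univ C → C.ncard = k := by
    intro C hC
    exact hgraded C ⟨hC.2.1, fun t ht hsub => (hC.2.2 t ht hsub (Set.subset_univ t)).symm⟩
  obtain ⟨ℓ, hℓ, C, h1, h2, h3, h4, h5⟩ :=
    aux k (Set.ncard (Set.univ : Set P)) Set.univ le_rfl Set.univ_nonempty
      Set.ordConnected_univ hconn hacyc hgrad
  refine ⟨ℓ, hℓ, C, ?_, ?_, h3, ?_, h5⟩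
  · intro j hj
    obtain ⟨_, hch, hmax⟩ := h1 j hj
    exact ⟨hch, fun t ht hsub => (hmax t ht hsub (Set.subset_univ t)).symm⟩
  · intro j hj D hD
    have hMCW : MCW (⋃ i, ⋃ (_ : i ≤ j), C i) (Subtype.val '' D) := by
      refine ⟨?_, ?_, ?_⟩
      · rintro x ⟨d, _, rfl⟩
        exact d.2
      · exact hD.1.image_of_map_rel _ _ Subtype.val (fun x y h => h)
      · intro C' hC' hsub hC'U
        have hD'chain : IsChain (· ≤ ·) (Subtype.val ⁻¹' C' :
            Set ↥(⋃ i, ⋃ (_ : i ≤ j), C i)) := by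
          intro a ha b hb hab
          have := hC'.total ha hb
          exact this.imp (fun h => h) (fun h => h)
        have hDD' : D ⊆ Subtype.val ⁻¹' C' := fun d hd => hsub ⟨d, hd, rfl⟩
        have hDeq : D = Subtype.val ⁻¹' C' := hD.2 hD'chain hDD'
        rw [hDeq, Subtype.image_preimage_coe]
        exact (Set.inter_eq_right.mpr hC'U).symm
    have := h2 j hj (Subtype.val '' D) hMCW
    rwa [Set.ncard_image_of_injective D Subtype.val_injective] at this
  · intro j hj0 hj
    obtain ⟨hne, hIcc, z, hz, hz2⟩ := h4 j hj0 hj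
    refine ⟨hne, hIcc, z, hz, ?_⟩
    rcases hz2 with h | h
    · exact Or.inl (isMin_iff_forall_not_lt.mpr (fun b => h.2 b trivial))
    · exact Or.inr (isMax_iff_forall_not_lt.mpr (fun b => h.2 b trivial))
end

section
/- Let F ⊆ 2^[n] with |F| > (2+ε)·C(n, ⌊n/2⌋) for some ε > 0. Then for n sufficiently large, F contains four distinct sets A, B, C, D with A ⊊ B, A ⊊ C, D ⊊ C, and moreover one can require additionally a fifth set E with D ⊊ E (i.e., F contains a copy of a 5-element 'fence' path poset of height 2). -/
set_option maxHeartbeats 1600000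

namespace Fence
open Finset

variable {n : ℕ}
open Finset

variable {n : ℕ}

def gd (σ : Equiv.Perm (Fin n)) (x : Finset (Fin n)) : Prop :=
  Finset.univ.filter (fun i => ((σ.symm i : Fin n) : ℕ) < x.card) = x

instance (σ : Equiv.Perm (Fin n)) (x : Finset (Fin n)) : Decidable (gd σ x) := by
  unfold gd; infer_instance

lemma gd_iff {σ : Equiv.Perm (Fin n)} {x : Finset (Fin n)} :
    gd σ x ↔ ∀ j : Fin n, ((j : ℕ) < x.card ↔ σ j ∈ x) := by
  unfold gd
  rw [Finset.ext_iff]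
  constructor
  · intro h j
    have := h (σ j)
    simpa using this
  · intro h i
    have := h (σ.symm i)
    simpa using this


/-- intervals in `Fin n` -/
def ivEquiv (a b : ℕ) (hbn : b ≤ n) :
    {j : Fin n // a ≤ (j : ℕ) ∧ (j : ℕ) < b} ≃ Fin (b - a) where
  toFun j := ⟨(j : ℕ) - a, by have := j.2; omega⟩
  invFun k := ⟨⟨(k : ℕ) + a, by have := k.2; omega⟩, by constructor <;> simp <;> omega⟩
  left_inv := by
    rintro ⟨⟨j, hj⟩, h1, h2⟩
    simp only [Fin.val_mk] at h1 h2
    apply Subtype.ext; apply Fin.ext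
    simp
    omega
  right_inv := by
    rintro ⟨k, hk⟩
    apply Fin.ext; simp

lemma card_iv (a b : ℕ) (hbn : b ≤ n) :
    Fintype.card {j : Fin n // a ≤ (j : ℕ) ∧ (j : ℕ) < b} = b - a :=
  (Fintype.card_congr (ivEquiv a b hbn)).trans (Fintype.card_fin _)

lemma card_lt (a : ℕ) (han : a ≤ n) :
    Fintype.card {j : Fin n // (j : ℕ) < a} = a := by
  have : Fintype.card {j : Fin n // (j : ℕ) < a}
      = Fintype.card {j : Fin n // 0 ≤ (j : ℕ) ∧ (j : ℕ) < a} := by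
    apply Fintype.card_congr
    exact Equiv.subtypeEquivRight (fun j => by simp)
  rw [this, card_iv 0 a han, Nat.sub_zero]

lemma card_ge (b : ℕ) :
    Fintype.card {j : Fin n // b ≤ (j : ℕ)} = n - b := by
  have : Fintype.card {j : Fin n // b ≤ (j : ℕ)}
      = Fintype.card {j : Fin n // b ≤ (j : ℕ) ∧ (j : ℕ) < n} := by
    apply Fintype.card_congr
    exact Equiv.subtypeEquivRight (fun j => by simp [j.2])
  rw [this, card_iv b n le_rfl]


lemma gd_subset {σ : Equiv.Perm (Fin n)} {x y : Finset (Fin n)} (hx : gd σ x) (hy : gd σ y)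
    (h : x.card ≤ y.card) : x ⊆ y := by
  rw [← hx, ← hy]
  intro i hi
  rw [mem_filter] at hi ⊢
  exact ⟨hi.1, lt_of_lt_of_le hi.2 h⟩

section Count


variable (x T : Finset (Fin n))

abbrev D (x T : Finset (Fin n)) :=
       ({j : Fin n // (j : ℕ) < x.card} ≃ {i : Fin n // i ∈ x})
     × ({j : Fin n // x.card ≤ (j : ℕ) ∧ (j : ℕ) < T.card} ≃ {i : Fin n // i ∈ T ∧ i ∉ x})
     × ({j : Fin n // T.card ≤ (j : ℕ)} ≃ {i : Fin n // i ∉ T})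

variable {x T}

def glueFun (e : D x T) : Fin n → Fin n := fun j =>
  if h : (j : ℕ) < x.card then (e.1 ⟨j, h⟩ : Fin n)
  else if h' : (j : ℕ) < T.card then (e.2.1 ⟨j, ⟨le_of_not_gt h, h'⟩⟩ : Fin n)
  else (e.2.2 ⟨j, le_of_not_gt h'⟩ : Fin n)

lemma glueFun_lt (e : D x T) {j : Fin n} (h : (j : ℕ) < x.card) :
    glueFun e j = (e.1 ⟨j, h⟩ : Fin n) := by simp [glueFun, dif_pos h]

lemma glueFun_mid (e : D x T) {j : Fin n} (h1 : x.card ≤ (j : ℕ)) (h2 : (j : ℕ) < T.card) :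
    glueFun e j = (e.2.1 ⟨j, ⟨h1, h2⟩⟩ : Fin n) := by
  simp [glueFun, dif_neg (not_lt.mpr h1), dif_pos h2]

lemma glueFun_ge (e : D x T) (hxT : x ⊆ T) {j : Fin n} (h1 : T.card ≤ (j : ℕ)) :
    glueFun e j = (e.2.2 ⟨j, h1⟩ : Fin n) := by
  have hax : x.card ≤ T.card := card_le_card hxT
  simp [glueFun, dif_neg (not_lt.mpr (le_trans hax h1)), dif_neg (not_lt.mpr h1)]

lemma glueFun_mem_x (e : D x T) {j : Fin n} (h : (j : ℕ) < x.card) :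
    glueFun e j ∈ x := by rw [glueFun_lt e h]; exact (e.1 ⟨j, h⟩).2

lemma glueFun_mem_mid (e : D x T) {j : Fin n} (h1 : x.card ≤ (j : ℕ)) (h2 : (j : ℕ) < T.card) :
    glueFun e j ∈ T ∧ glueFun e j ∉ x := by rw [glueFun_mid e h1 h2]; exact (e.2.1 ⟨j, ⟨h1, h2⟩⟩).2

lemma glueFun_mem_out (e : D x T) (hxT : x ⊆ T) {j : Fin n} (h1 : T.card ≤ (j : ℕ)) :
    glueFun e j ∉ T := by rw [glueFun_ge e hxT h1]; exact (e.2.2 ⟨j, h1⟩).2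

lemma glueFun_inj (e : D x T) (hxT : x ⊆ T) : Function.Injective (glueFun e) := by
  have hax : x.card ≤ T.card := card_le_card hxT
  intro j j' hjj
  rcases lt_or_ge ((j : ℕ)) x.card with h1 | h1 <;>
    rcases lt_or_ge ((j' : ℕ)) x.card with h1' | h1'
  · -- both in first block
    rw [glueFun_lt e h1, glueFun_lt e h1'] at hjj
    have := e.1.injective (Subtype.ext hjj)
    exact congrArg Subtype.val this
  · rcases lt_or_ge ((j' : ℕ)) T.card with h2' | h2'
    · exact absurd (glueFun_mem_x e h1) (hjj ▸ (glueFun_mem_mid e h1' h2').2)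
    · exact absurd (hxT (glueFun_mem_x e h1)) (hjj ▸ (glueFun_mem_out e hxT h2'))
  · rcases lt_or_ge ((j : ℕ)) T.card with h2 | h2
    · exact absurd (glueFun_mem_x e h1') (hjj ▸ (glueFun_mem_mid e h1 h2).2)
    · exact absurd (hxT (glueFun_mem_x e h1')) (hjj ▸ (glueFun_mem_out e hxT h2))
  · rcases lt_or_ge ((j : ℕ)) T.card with h2 | h2 <;>
      rcases lt_or_ge ((j' : ℕ)) T.card with h2' | h2'
    · rw [glueFun_mid e h1 h2, glueFun_mid e h1' h2'] at hjj
      have := e.2.1.injective (Subtype.ext hjj)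
      exact congrArg Subtype.val this
    · exact absurd (glueFun_mem_mid e h1 h2).1 (hjj ▸ (glueFun_mem_out e hxT h2'))
    · exact absurd (glueFun_mem_mid e h1' h2').1 (hjj ▸ (glueFun_mem_out e hxT h2))
    · rw [glueFun_ge e hxT h2, glueFun_ge e hxT h2'] at hjj
      have := e.2.2.injective (Subtype.ext hjj)
      exact congrArg Subtype.val this

noncomputable def glue (hxT : x ⊆ T) (e : D x T) : Equiv.Perm (Fin n) :=
  Equiv.ofBijective (glueFun e) (Finite.injective_iff_bijective.mp (glueFun_inj e hxT))

lemma glue_apply (hxT : x ⊆ T) (e : D x T) (j : Fin n) : glue hxT e j = glueFun e j := rfl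

lemma glue_mem (hxT : x ⊆ T) (e : D x T) : gd (glue hxT e) x ∧ gd (glue hxT e) T := by
  have hax : x.card ≤ T.card := card_le_card hxT
  constructor
  · rw [gd_iff]
    intro j
    rw [glue_apply]
    constructor
    · intro h
      exact glueFun_mem_x e h
    · intro hm
      by_contra h
      rcases lt_or_ge ((j : ℕ)) T.card with h2 | h2
      · exact (glueFun_mem_mid e (le_of_not_gt h) h2).2 hm
      · exact (glueFun_mem_out e hxT h2) (hxT hm)
  · rw [gd_iff]
    intro j
    rw [glue_apply]
    constructor
    · intro h'
      rcases lt_or_ge ((j : ℕ)) x.card with h1 | h1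
      · exact hxT (glueFun_mem_x e h1)
      · exact (glueFun_mem_mid e h1 h').1
    · intro hm
      by_contra h'
      exact (glueFun_mem_out e hxT (le_of_not_gt h')) hm

lemma glue_inj (hxT : x ⊆ T) : Function.Injective (glue (n := n) hxT) := by
  intro e e' hee
  have hfun : ∀ j : Fin n, glueFun e j = glueFun e' j := by
    intro j
    have := congrArg (fun σ : Equiv.Perm (Fin n) => σ j) hee
    simpa [glue_apply] using this
  refine Prod.ext ?_ (Prod.ext ?_ ?_)
  · apply Equiv.ext
    rintro ⟨j, h⟩
    have := hfun j
    rw [glueFun_lt e h, glueFun_lt e' h] at this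
    exact Subtype.ext this
  · apply Equiv.ext
    rintro ⟨j, h1, h2⟩
    have := hfun j
    rw [glueFun_mid e h1 h2, glueFun_mid e' h1 h2] at this
    exact Subtype.ext this
  · apply Equiv.ext
    rintro ⟨j, h1⟩
    have := hfun j
    rw [glueFun_ge e hxT h1, glueFun_ge e' hxT h1] at this
    exact Subtype.ext this

def split (σp : {σ : Equiv.Perm (Fin n) // gd σ x ∧ gd σ T}) : D x T :=
  ⟨σp.1.subtypeEquiv (fun j => (gd_iff.mp σp.2.1 j)),
   σp.1.subtypeEquiv (fun j => by
     have hx := gd_iff.mp σp.2.1 j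
     have hT := gd_iff.mp σp.2.2 j
     constructor
     · rintro ⟨h1, h2⟩
       exact ⟨hT.mp h2, fun hc => absurd (hx.mpr hc) (not_lt.mpr h1)⟩
     · rintro ⟨h1, h2⟩
       exact ⟨not_lt.mp (fun hc => h2 (hx.mp hc)), hT.mpr h1⟩),
   σp.1.subtypeEquiv (fun j => by
     have hT := gd_iff.mp σp.2.2 j
     constructor
     · intro h1
       exact fun hc => absurd (hT.mpr hc) (not_lt.mpr h1)
     · intro h1
       exact not_lt.mp (fun hc => h1 (hT.mp hc)))⟩

lemma split_inj : Function.Injective (split (x := x) (T := T) (n := n)) := by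
  rintro ⟨σ, hσ⟩ ⟨σ', hσ'⟩ h
  have hfun : ∀ j : Fin n, σ j = σ' j := by
    intro j
    rcases lt_or_ge ((j : ℕ)) x.card with h1 | h1
    · have := congrArg (fun d : D x T => (d.1 ⟨j, h1⟩ : Fin n)) h
      simpa [split] using this
    · rcases lt_or_ge ((j : ℕ)) T.card with h2 | h2
      · have := congrArg (fun d : D x T => (d.2.1 ⟨j, ⟨h1, h2⟩⟩ : Fin n)) h
        simpa [split] using this
      · have := congrArg (fun d : D x T => (d.2.2 ⟨j, h2⟩ : Fin n)) h
        simpa [split] using this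
  exact Subtype.ext (Equiv.ext hfun)

lemma card_subtype_pair (hxT : x ⊆ T) :
    Fintype.card {σ : Equiv.Perm (Fin n) // gd σ x ∧ gd σ T} = Fintype.card (D x T) :=
  le_antisymm (Fintype.card_le_of_injective _ (split_inj))
    (Fintype.card_le_of_injective
      (fun e : D x T => (⟨glue hxT e, glue_mem hxT e⟩ : {σ : Equiv.Perm (Fin n) // gd σ x ∧ gd σ T}))
      (fun e e' hee => glue_inj hxT (congrArg Subtype.val hee)))


lemma card_D (hxT : x ⊆ T) :
    Fintype.card (D x T)
      = Nat.factorial (x.card) * Nat.factorial (T.card - x.card) * Nat.factorial (n - T.card) := by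
  have hTn : T.card ≤ n := by
    simpa using card_le_card (subset_univ T)
  have hxn : x.card ≤ T.card := card_le_card hxT
  have c1 : Fintype.card ({j : Fin n // (j : ℕ) < x.card} ≃ {i : Fin n // i ∈ x})
      = Nat.factorial (x.card) := by
    have h1 : Fintype.card {j : Fin n // (j : ℕ) < x.card} = x.card :=
      card_lt _ (le_trans hxn hTn)
    have h2 : Fintype.card {i : Fin n // i ∈ x} = x.card := Fintype.card_coe x
    rw [Fintype.card_equiv (Fintype.equivOfCardEq (h1.trans h2.symm)), h1]
  have c2 : Fintype.card
        ({j : Fin n // x.card ≤ (j : ℕ) ∧ (j : ℕ) < T.card} ≃ {i : Fin n // i ∈ T ∧ i ∉ x})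
      = Nat.factorial (T.card - x.card) := by
    have h1 : Fintype.card {j : Fin n // x.card ≤ (j : ℕ) ∧ (j : ℕ) < T.card}
        = T.card - x.card := card_iv _ _ hTn
    have h2 : Fintype.card {i : Fin n // i ∈ T ∧ i ∉ x} = T.card - x.card := by
      have he : Fintype.card {i : Fin n // i ∈ T ∧ i ∉ x} = Fintype.card {i : Fin n // i ∈ T \ x} :=
        Fintype.card_congr (Equiv.subtypeEquivRight (fun i => by simp [mem_sdiff, and_comm]))
      rw [he, Fintype.card_coe, card_sdiff_of_subset hxT]
    rw [Fintype.card_equiv (Fintype.equivOfCardEq (h1.trans h2.symm)), h1]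
  have c3 : Fintype.card ({j : Fin n // T.card ≤ (j : ℕ)} ≃ {i : Fin n // i ∉ T})
      = Nat.factorial (n - T.card) := by
    have h1 : Fintype.card {j : Fin n // T.card ≤ (j : ℕ)} = n - T.card := card_ge _
    have h2 : Fintype.card {i : Fin n // i ∉ T} = n - T.card := by
      have he : Fintype.card {i : Fin n // i ∉ T} = Fintype.card {i : Fin n // i ∈ Tᶜ} :=
        Fintype.card_congr (Equiv.subtypeEquivRight (fun i => by simp))
      rw [he, Fintype.card_coe, card_compl, Fintype.card_fin]
    rw [Fintype.card_equiv (Fintype.equivOfCardEq (h1.trans h2.symm)), h1]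
  rw [Fintype.card_prod, Fintype.card_prod, c1, c2, c3, mul_assoc]

lemma count_pair (hxT : x ⊆ T) :
    (univ.filter (fun σ : Equiv.Perm (Fin n) => gd σ x ∧ gd σ T)).card
      = Nat.factorial (x.card) * Nat.factorial (T.card - x.card) * Nat.factorial (n - T.card) := by
  rw [← Fintype.card_subtype, card_subtype_pair hxT, card_D hxT]

lemma count_single (x : Finset (Fin n)) :
    (univ.filter (fun σ : Equiv.Perm (Fin n) => gd σ x)).card
      = Nat.factorial (x.card) * Nat.factorial (n - x.card) := by
  have h := count_pair (x := x) (T := x) (subset_refl x)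
  simp only [Nat.sub_self, Nat.factorial_zero, mul_one, and_self] at h
  rw [← h]

end Count

open Finset



lemma choose_lower : ∀ r d : ℕ, 1 ≤ d → d < r → r ≤ r.choose d := by
  intro r
  induction r with
  | zero => omega
  | succ r ih =>
    intro d h1 h2
    match d, h1 with
    | 1, _ => simp [Nat.choose_one_right]
    | (k+2), _ =>
      rw [Nat.choose_succ_succ']
      have ha : r ≤ r.choose (k+1) := ih (k+1) (by omega) (by omega)
      have hb : 0 < r.choose (k+1+1) := Nat.choose_pos (by omega)
      omega

/-- number of permutations through `x` -/
def cnt1 (x : Finset (Fin n)) : ℕ := (univ.filter (fun σ : Equiv.Perm (Fin n) => gd σ x)).card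

/-- number of permutations through `x` and `T` -/
def cnt2 (x T : Finset (Fin n)) : ℕ :=
  (univ.filter (fun σ : Equiv.Perm (Fin n) => gd σ x ∧ gd σ T)).card

lemma count_pair_small {s : ℕ} {x T : Finset (Fin n)} (hxT : x ⊂ T)
    (hsn : x.card + s ≤ n) (hTn : T.card + s ≤ n) (hs1 : 1 ≤ s) :
    s * cnt2 x T ≤ cnt1 x := by
  have hsub : x ⊆ T := hxT.subset
  have hcard : x.card < T.card := card_lt_card hxT
  rw [cnt2, cnt1, count_pair hsub, count_single]
  set a := x.card
  set b := T.card
  have key : Nat.factorial (n - a)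
      = (n - a).choose (b - a) * (Nat.factorial (b - a) * Nat.factorial (n - b)) := by
    have h1 : b - a ≤ n - a := by omega
    have h := Nat.choose_mul_factorial_mul_factorial h1
    have h2 : n - a - (b - a) = n - b := by omega
    rw [h2] at h
    rw [← h, mul_assoc]
  have hlow : s ≤ (n - a).choose (b - a) := by
    have : n - a ≤ (n - a).choose (b - a) := choose_lower (n - a) (b - a) (by omega) (by omega)
    omega
  calc s * (Nat.factorial a * Nat.factorial (b - a) * Nat.factorial (n - b))
      ≤ (n - a).choose (b - a) * (Nat.factorial a * Nat.factorial (b - a) * Nat.factorial (n - b)) :=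
        Nat.mul_le_mul_right _ hlow
    _ = Nat.factorial a * ((n - a).choose (b - a) * (Nat.factorial (b - a) * Nat.factorial (n - b))) := by
        ring
    _ = Nat.factorial a * Nat.factorial (n - a) := by rw [← key]

/-- "middle of a 3-chain on the chain of σ within G" predicate -/
def midP (G : Finset (Finset (Fin n))) (σ : Equiv.Perm (Fin n)) (x : Finset (Fin n)) : Prop :=
  gd σ x ∧ (∃ A ∈ G, gd σ A ∧ A ⊂ x) ∧ (∃ T ∈ G, gd σ T ∧ x ⊂ T)

instance (G : Finset (Finset (Fin n))) (σ : Equiv.Perm (Fin n)) (x : Finset (Fin n)) :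
    Decidable (midP G σ x) := by unfold midP; infer_instance

/-- number of permutations where `x` is a middle -/
def cntm (G : Finset (Finset (Fin n))) (x : Finset (Fin n)) : ℕ :=
  (univ.filter (fun σ : Equiv.Perm (Fin n) => midP G σ x)).card

lemma chain_card_le (σ : Equiv.Perm (Fin n)) (G : Finset (Finset (Fin n))) :
    (G.filter (fun x => gd σ x)).card ≤ 2 + (G.filter (fun x => midP G σ x)).card := by
  by_cases hcc : (G.filter (fun x => gd σ x)).card ≤ 2
  · omega
  · have hne : (G.filter (fun x => gd σ x)).Nonempty := by
      rw [← card_pos]; omega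
    obtain ⟨u, hu, humin⟩ := exists_min_image _ (fun x => x.card) hne
    obtain ⟨v, hv, hvmax⟩ := exists_max_image _ (fun x => x.card) hne
    have hsub : (G.filter (fun x => gd σ x)) \ {u, v} ⊆ G.filter (fun x => midP G σ x) := by
      intro y hy
      rw [mem_sdiff, mem_insert, mem_singleton] at hy
      obtain ⟨hyc, hyuv⟩ := hy
      push_neg at hyuv
      obtain ⟨hyu, hyv⟩ := hyuv
      have hyG : y ∈ G := (mem_filter.mp hyc).1
      have hygd : gd σ y := (mem_filter.mp hyc).2
      have hugd : gd σ u := (mem_filter.mp hu).2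
      have hvgd : gd σ v := (mem_filter.mp hv).2
      have huy : u ⊂ y :=
        (gd_subset hugd hygd (humin y hyc)).ssubset_of_ne (fun h => hyu h.symm)
      have hyv' : y ⊂ v :=
        (gd_subset hygd hvgd (hvmax y hyc)).ssubset_of_ne hyv
      rw [mem_filter]
      exact ⟨hyG, hygd, ⟨u, (mem_filter.mp hu).1, hugd, huy⟩, ⟨v, (mem_filter.mp hv).1, hvgd, hyv'⟩⟩
    have h1 : (G.filter (fun x => gd σ x)).card - 2 ≤ ((G.filter (fun x => gd σ x)) \ {u, v}).card := by
      have := le_card_sdiff ({u, v} : Finset (Finset (Fin n))) (G.filter (fun x => gd σ x))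
      have h2 : ({u, v} : Finset (Finset (Fin n))).card ≤ 2 :=
        (card_insert_le _ _).trans (by simp)
      omega
    have h3 := card_le_card hsub
    omega

def Cfg (F : Finset (Finset (Fin n))) : Prop :=
  ∀ A xx T1 T2 T3 : Finset (Fin n), A ∈ F → xx ∈ F → T1 ∈ F → T2 ∈ F → T3 ∈ F →
    A ⊂ xx → xx ⊂ T1 → xx ⊂ T2 → xx ⊂ T3 → (T1 = T2 ∨ T1 = T3 ∨ T2 = T3)

lemma sups_card_le {F : Finset (Finset (Fin n))} (hcfg : Cfg F) {x A : Finset (Fin n)}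
    (hx : x ∈ F) (hA : A ∈ F) (hAx : A ⊂ x) : (F.filter (fun T => x ⊂ T)).card ≤ 2 := by
  by_contra hgt
  push_neg at hgt
  obtain ⟨T1, T2, T3, h1, h2, h3, h12, h13, h23⟩ := two_lt_card_iff.mp hgt
  rw [mem_filter] at h1 h2 h3
  rcases hcfg A x T1 T2 T3 hA hx h1.1 h2.1 h3.1 hAx h1.2 h2.2 h3.2 with h | h | h
  · exact h12 h
  · exact h13 h
  · exact h23 h

lemma per_x {F G : Finset (Finset (Fin n))} {s : ℕ} (hcfg : Cfg F) (hs1 : 1 ≤ s)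
    (hGF : G ⊆ F) (hGwin : ∀ y ∈ G, y.card + s ≤ n)
    {x : Finset (Fin n)} (hxF : x ∈ F) (hxw : x.card + s ≤ n) :
    s * cntm G x ≤ 2 * cnt1 x := by
  by_cases hsub : ∃ A ∈ G, A ⊂ x
  · obtain ⟨A, hAG, hAx⟩ := hsub
    have hUB : cntm G x ≤ ∑ T ∈ G.filter (fun T => x ⊂ T), cnt2 x T := by
      rw [cntm]
      refine le_trans (card_le_card ?_) (card_biUnion_le
        (s := G.filter (fun T => x ⊂ T))
        (t := fun T => univ.filter (fun σ : Equiv.Perm (Fin n) => gd σ x ∧ gd σ T)))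
      intro σ hσ
      rw [mem_filter] at hσ
      obtain ⟨_, hgdx, _, T, hTG, hgdT, hxT⟩ := hσ
      rw [mem_biUnion]
      exact ⟨T, by rw [mem_filter]; exact ⟨hTG, hxT⟩, by
        rw [mem_filter]; exact ⟨mem_univ _, hgdx, hgdT⟩⟩
    have hsmall : ∀ T ∈ G.filter (fun T => x ⊂ T), s * cnt2 x T ≤ cnt1 x := by
      intro T hT
      rw [mem_filter] at hT
      exact count_pair_small hT.2 hxw (hGwin T hT.1) hs1
    have hsups2 : (G.filter (fun T => x ⊂ T)).card ≤ 2 := by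
      have hsub2 : G.filter (fun T => x ⊂ T) ⊆ F.filter (fun T => x ⊂ T) :=
        filter_subset_filter _ hGF
      exact le_trans (card_le_card hsub2) (sups_card_le hcfg hxF (hGF hAG) hAx)
    calc s * cntm G x ≤ s * ∑ T ∈ G.filter (fun T => x ⊂ T), cnt2 x T :=
          Nat.mul_le_mul_left _ hUB
      _ = ∑ T ∈ G.filter (fun T => x ⊂ T), s * cnt2 x T := by rw [mul_sum]
      _ ≤ ∑ _T ∈ G.filter (fun T => x ⊂ T), cnt1 x := sum_le_sum hsmall
      _ = (G.filter (fun T => x ⊂ T)).card * cnt1 x := by rw [sum_const, smul_eq_mul]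
      _ ≤ 2 * cnt1 x := Nat.mul_le_mul_right _ hsups2
  · have hz : cntm G x = 0 := by
      rw [cntm, card_eq_zero, filter_eq_empty_iff]
      rintro σ _ ⟨_, ⟨A, hAG, _, hAx⟩, _⟩
      exact hsub ⟨A, hAG, hAx⟩
    rw [hz]
    omega

/-- generic double counting swap -/
lemma swap_card (P : Finset (Finset (Fin n))) (p : Equiv.Perm (Fin n) → Finset (Fin n) → Prop)
    [∀ σ x, Decidable (p σ x)] :
    ∑ x ∈ P, (univ.filter (fun σ : Equiv.Perm (Fin n) => p σ x)).card
      = ∑ σ : Equiv.Perm (Fin n), (P.filter (fun x => p σ x)).card := by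
  calc ∑ x ∈ P, (univ.filter (fun σ : Equiv.Perm (Fin n) => p σ x)).card
      = ∑ x ∈ P, ∑ σ ∈ univ, (if p σ x then 1 else 0) := by
        refine sum_congr rfl (fun x _ => ?_)
        rw [card_filter]
    _ = ∑ σ ∈ univ, ∑ x ∈ P, (if p σ x then 1 else 0) := sum_comm
    _ = ∑ σ : Equiv.Perm (Fin n), (P.filter (fun x => p σ x)).card := by
        refine sum_congr rfl (fun σ _ => ?_)
        rw [card_filter]

theorem main_bound {F G : Finset (Finset (Fin n))} {s : ℕ} (hcfg : Cfg F) (hs : 3 ≤ s)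
    (hGF : G ⊆ F) (hGwin : ∀ y ∈ G, y.card + s ≤ n) :
    (s - 2) * G.card * Nat.factorial n ≤ 2 * s * (n.choose (n / 2)) * Nat.factorial n := by
  set m := n.choose (n / 2) with hm
  set S := ∑ x ∈ G, cnt1 x with hS
  have hAx : ∀ x ∈ G, Nat.factorial n ≤ m * cnt1 x := by
    intro x hx
    have hxcard : x.card ≤ n := by simpa using card_le_card (subset_univ x)
    have hfac := Nat.choose_mul_factorial_mul_factorial hxcard
    have h3 : n.choose x.card * cnt1 x = Nat.factorial n := by
      rw [cnt1, count_single, ← mul_assoc]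
      exact hfac
    calc Nat.factorial n = n.choose x.card * cnt1 x := h3.symm
      _ ≤ m * cnt1 x := Nat.mul_le_mul_right _ (Nat.choose_le_middle _ _)
  have hA : G.card * Nat.factorial n ≤ m * S := by
    calc G.card * Nat.factorial n = ∑ _x ∈ G, Nat.factorial n := by
          rw [sum_const, smul_eq_mul]
      _ ≤ ∑ x ∈ G, m * cnt1 x := sum_le_sum hAx
      _ = m * S := by rw [hS, mul_sum]
  have hB : S = ∑ σ : Equiv.Perm (Fin n), (G.filter (fun x => gd σ x)).card :=
    swap_card G (fun σ x => gd σ x)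
  have hC : S ≤ 2 * Nat.factorial n + ∑ σ : Equiv.Perm (Fin n), (G.filter (fun x => midP G σ x)).card := by
    rw [hB]
    calc ∑ σ : Equiv.Perm (Fin n), (G.filter (fun x => gd σ x)).card
        ≤ ∑ σ : Equiv.Perm (Fin n), (2 + (G.filter (fun x => midP G σ x)).card) :=
          sum_le_sum (fun σ _ => chain_card_le σ G)
      _ = 2 * Nat.factorial n + ∑ σ : Equiv.Perm (Fin n), (G.filter (fun x => midP G σ x)).card := by
          rw [sum_add_distrib, sum_const, card_univ, Fintype.card_perm, Fintype.card_fin,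
            smul_eq_mul, mul_comm]
  have hD : s * (∑ σ : Equiv.Perm (Fin n), (G.filter (fun x => midP G σ x)).card) ≤ 2 * S := by
    have hswap : ∑ σ : Equiv.Perm (Fin n), (G.filter (fun x => midP G σ x)).card
        = ∑ x ∈ G, cntm G x := (swap_card G (fun σ x => midP G σ x)).symm
    rw [hswap, mul_sum]
    calc ∑ x ∈ G, s * cntm G x ≤ ∑ x ∈ G, 2 * cnt1 x := by
          refine sum_le_sum (fun x hx => ?_)
          exact per_x hcfg (by omega) hGF hGwin (hGF hx) (hGwin x hx)
      _ = 2 * S := by rw [hS, mul_sum]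
  have hcomb : (s - 2) * S ≤ 2 * s * Nat.factorial n := by
    have h1 : s * S ≤ s * (2 * Nat.factorial n) + 2 * S := by
      calc s * S ≤ s * (2 * Nat.factorial n
            + ∑ σ : Equiv.Perm (Fin n), (G.filter (fun x => midP G σ x)).card) :=
            Nat.mul_le_mul_left _ hC
        _ = s * (2 * Nat.factorial n)
            + s * ∑ σ : Equiv.Perm (Fin n), (G.filter (fun x => midP G σ x)).card := by
            rw [mul_add]
        _ ≤ s * (2 * Nat.factorial n) + 2 * S := Nat.add_le_add_left hD _
    have h2 : (s - 2) * S + 2 * S = s * S := by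
      rw [← add_mul]
      congr 1
      omega
    have h3 : s * (2 * Nat.factorial n) = 2 * s * Nat.factorial n := by ring
    omega
  calc (s - 2) * G.card * Nat.factorial n = (s - 2) * (G.card * Nat.factorial n) := by ring
    _ ≤ (s - 2) * (m * S) := Nat.mul_le_mul_left _ hA
    _ = m * ((s - 2) * S) := by ring
    _ ≤ m * (2 * s * Nat.factorial n) := Nat.mul_le_mul_left _ hcomb
    _ = 2 * s * m * Nat.factorial n := by ring




/-- the target existential statement -/
def GoalP (n : ℕ) (F : Finset (Finset (Fin n))) : Prop :=
  ∃ A B C D E : Finset (Fin n),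
    A ∈ F ∧ B ∈ F ∧ C ∈ F ∧ D ∈ F ∧ E ∈ F ∧
    A ≠ B ∧ A ≠ C ∧ A ≠ D ∧ A ≠ E ∧ B ≠ C ∧ B ≠ D ∧ B ≠ E ∧
    C ≠ D ∧ C ≠ E ∧ D ≠ E ∧
    A ⊂ B ∧ A ⊂ C ∧ D ⊂ C ∧ D ⊂ E

lemma cfg_of_no {F : Finset (Finset (Fin n))} (hno : ¬ GoalP n F) : Cfg F := by
  intro A xx T1 T2 T3 hA hx h1 h2 h3 hAx hx1 hx2 hx3
  by_contra hne
  push_neg at hne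
  obtain ⟨h12, h13, h23⟩ := hne
  apply hno
  refine ⟨A, T3, T1, xx, T2, hA, h3, h1, hx, h2, ?_⟩
  have hA3 : A ⊂ T3 := hAx.trans hx3
  have hA1 : A ⊂ T1 := hAx.trans hx1
  have hA2 : A ⊂ T2 := hAx.trans hx2
  exact ⟨hA3.ne, hA1.ne, hAx.ne, hA2.ne, Ne.symm h13, hx3.ne', fun h => h23 h.symm,
    hx1.ne', h12, hx2.ne, hA3, hA1, hx1, hx2⟩

lemma two_pow_le (n : ℕ) : 2 ^ n ≤ (n + 1) * n.choose (n / 2) := by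
  have h := Nat.sum_range_choose n
  calc 2 ^ n = ∑ i ∈ range (n + 1), n.choose i := h.symm
    _ ≤ ∑ _i ∈ range (n + 1), n.choose (n / 2) :=
        sum_le_sum (fun i _ => Nat.choose_le_middle i n)
    _ = (n + 1) * n.choose (n / 2) := by rw [sum_const, card_range, smul_eq_mul]

lemma tail_bound (F : Finset (Finset (Fin n))) (s : ℕ) (hn : 1 ≤ n) :
    (F.filter (fun y => ¬ (y.card + s ≤ n))).card ≤ s * n ^ s := by
  have hstep1 : (F.filter (fun y => ¬ (y.card + s ≤ n))).card
      ≤ (univ.powerset.filter (fun z : Finset (Fin n) => z.card < s)).card := by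
    apply card_le_card_of_injOn (fun y => yᶜ)
    · intro y hy
      rw [mem_coe, mem_filter] at hy
      have hycard : y.card ≤ n := by simpa using card_le_card (subset_univ y)
      rw [mem_coe, mem_filter, mem_powerset]
      refine ⟨subset_univ _, ?_⟩
      rw [card_compl, Fintype.card_fin]
      omega
    · intro y _ z _ h
      simpa using congrArg (fun w => wᶜ) h
  have hstep2 : (univ.powerset.filter (fun z : Finset (Fin n) => z.card < s)).card ≤ s * n ^ s := by
    have hsub : (univ.powerset.filter (fun z : Finset (Fin n) => z.card < s))
        ⊆ (range s).biUnion (fun j => powersetCard j (univ : Finset (Fin n))) := by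
      intro z hz
      rw [mem_filter] at hz
      rw [mem_biUnion]
      exact ⟨z.card, mem_range.mpr hz.2, by
        rw [mem_powersetCard]; exact ⟨subset_univ _, rfl⟩⟩
    calc (univ.powerset.filter (fun z : Finset (Fin n) => z.card < s)).card
        ≤ ((range s).biUnion (fun j => powersetCard j (univ : Finset (Fin n)))).card :=
          card_le_card hsub
      _ ≤ ∑ j ∈ range s, (powersetCard j (univ : Finset (Fin n))).card := card_biUnion_le
      _ = ∑ j ∈ range s, n.choose j := by
          refine sum_congr rfl (fun j _ => ?_)
          rw [card_powersetCard, card_univ, Fintype.card_fin]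
      _ ≤ ∑ j ∈ range s, n ^ s := by
          refine sum_le_sum (fun j hj => ?_)
          calc n.choose j ≤ n ^ j := Nat.choose_le_pow n j
            _ ≤ n ^ s := Nat.pow_le_pow_right hn (le_of_lt (mem_range.mp hj))
      _ = s * n ^ s := by rw [sum_const, card_range, smul_eq_mul]
  omega

lemma eventually_small (s : ℕ) (c : ℝ) (hc : 0 < c) :
    ∃ N : ℕ, ∀ n ≥ N, (s : ℝ) * (n : ℝ) ^ s * ((n : ℝ) + 1) ≤ c * 2 ^ n := by
  have htend := tendsto_pow_const_div_const_pow_of_one_lt (s + 3) (show (1:ℝ) < 2 by norm_num)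
  have hev : ∀ᶠ m : ℕ in Filter.atTop, ((m : ℝ)) ^ (s + 3) / 2 ^ m < c :=
    htend.eventually_lt_const hc
  obtain ⟨N0, hN0⟩ := Filter.eventually_atTop.mp hev
  refine ⟨max N0 (max s 2), fun n hn => ?_⟩
  have hn0 : n ≥ N0 := le_trans (le_max_left _ _) hn
  have hns : (s : ℝ) ≤ (n : ℝ) := by
    have : s ≤ n := le_trans (le_trans (le_max_left _ _) (le_max_right _ _)) hn
    exact_mod_cast this
  have hn2 : (2 : ℝ) ≤ (n : ℝ) := by
    have : 2 ≤ n := le_trans (le_trans (le_max_right _ _) (le_max_right _ _)) hn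
    exact_mod_cast this
  have hnn : (0:ℝ) < (n:ℝ) := by linarith
  have hkey : ((n : ℝ)) ^ (s + 3) < c * 2 ^ n := by
    have h2 : (0:ℝ) < 2 ^ n := by positivity
    have := hN0 n hn0
    rw [div_lt_iff₀ h2] at this
    linarith [this]
  have hb : (s : ℝ) * (n : ℝ) ^ s * ((n : ℝ) + 1) ≤ ((n : ℝ)) ^ (s + 3) := by
    have h1 : ((n:ℝ) + 1) ≤ (n:ℝ) * (n:ℝ) := by nlinarith
    have h2 : (0:ℝ) ≤ (n:ℝ) ^ s := by positivity
    calc (s : ℝ) * (n : ℝ) ^ s * ((n : ℝ) + 1) ≤ (n : ℝ) * (n : ℝ) ^ s * ((n:ℝ) * (n:ℝ)) := by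
          apply mul_le_mul
          · exact mul_le_mul_of_nonneg_right hns h2
          · exact h1
          · linarith
          · positivity
      _ = ((n : ℝ)) ^ (s + 3) := by ring
  linarith

theorem stmt14' (ε : ℝ) (hε : 0 < ε) :
    ∃ N : ℕ, ∀ n ≥ N, ∀ F : Finset (Finset (Fin n)),
      (2 + ε) * (n.choose (n / 2) : ℝ) < (F.card : ℝ) → GoalP n F := by
  set s : ℕ := ⌈(8:ℝ)/ε⌉₊ + 3 with hsdef
  have hs3 : 3 ≤ s := by omega
  obtain ⟨N0, hN0⟩ := eventually_small s (ε/2) (by linarith)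
  refine ⟨max N0 1, fun n hn F hF => ?_⟩
  by_contra hno
  have hcfg : Cfg F := cfg_of_no hno
  have hn1 : 1 ≤ n := le_trans (le_max_right _ _) hn
  have hn0 : N0 ≤ n := le_trans (le_max_left _ _) hn
  set m := n.choose (n / 2) with hm
  set Fw := F.filter (fun y => y.card + s ≤ n) with hFw
  -- natural number bounds
  have hmain := main_bound (G := Fw) hcfg hs3 (filter_subset _ _)
    (fun y hy => (mem_filter.mp hy).2)
  have hcancel : (s - 2) * Fw.card ≤ 2 * s * m :=
    Nat.le_of_mul_le_mul_right (by rw [mul_assoc, mul_assoc] at hmain ⊢; exact hmain)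
      (Nat.factorial_pos n)
  have hsplit : Fw.card + (F.filter (fun y => ¬ (y.card + s ≤ n))).card = F.card :=
    card_filter_add_card_filter_not _
  have htail : (F.filter (fun y => ¬ (y.card + s ≤ n))).card ≤ s * n ^ s :=
    tail_bound F s hn1
  -- real arithmetic
  have hmpos : 0 < m := Nat.choose_pos (Nat.div_le_self n 2)
  have hmR : (0:ℝ) < (m:ℝ) := by exact_mod_cast hmpos
  have hsR : ((s:ℝ) - 2) ≥ 1 + 8/ε := by
    have hceil : (8:ℝ)/ε ≤ (⌈(8:ℝ)/ε⌉₊ : ℝ) := Nat.le_ceil _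
    have : (s : ℝ) = (⌈(8:ℝ)/ε⌉₊ : ℝ) + 3 := by exact_mod_cast congrArg Nat.cast hsdef
    rw [this]
    linarith
  have hfrac : (ε/2) * ((s:ℝ) - 2) ≥ 4 := by
    have h8 : (ε/2) * (8/ε) = 4 := by field_simp; ring
    have hεpos : (0:ℝ) < ε/2 := by linarith
    nlinarith [hsR]
  have h1R : ((s:ℝ) - 2) * (Fw.card : ℝ) ≤ 2 * s * m := by
    have hcast : ((s - 2 : ℕ) : ℝ) = (s:ℝ) - 2 := by
      have : (2:ℕ) ≤ s := by omega
      exact Nat.cast_sub this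
    calc ((s:ℝ) - 2) * (Fw.card : ℝ) = (((s-2) * Fw.card : ℕ) : ℝ) := by
          push_cast [hcast]; ring
      _ ≤ ((2 * s * m : ℕ) : ℝ) := by exact_mod_cast hcancel
      _ = 2 * s * m := by push_cast; ring
  have hFwR : (Fw.card : ℝ) ≤ (2 + ε/2) * m := by
    have hspos : (0:ℝ) < (s:ℝ) - 2 := by
      have : (0:ℝ) < 8/ε := by positivity
      linarith
    have key : 2 * (s:ℝ) * m ≤ (2 + ε/2) * m * ((s:ℝ) - 2) := by
      have expand : (2 + ε/2) * m * ((s:ℝ) - 2) = 2 * (s:ℝ) * m - 4 * m + (ε/2) * ((s:ℝ)-2) * m := by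
        ring
      rw [expand]
      nlinarith [hfrac, hmR]
    have h6 : ((s:ℝ) - 2) * (Fw.card : ℝ) ≤ ((s:ℝ) - 2) * ((2 + ε/2) * m) := by
      have : (2 + ε/2) * m * ((s:ℝ) - 2) = ((s:ℝ) - 2) * ((2 + ε/2) * m) := by ring
      linarith [le_trans h1R key, this.ge]
    exact le_of_mul_le_mul_left h6 hspos
  have htailR : ((F.filter (fun y => ¬ (y.card + s ≤ n))).card : ℝ) ≤ (ε/2) * m := by
    have h1 : ((F.filter (fun y => ¬ (y.card + s ≤ n))).card : ℝ) ≤ (s:ℝ) * (n:ℝ)^s := by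
      exact_mod_cast htail
    have h2 : (s:ℝ) * (n:ℝ)^s * ((n:ℝ)+1) ≤ (ε/2) * 2^n := hN0 n hn0
    have h3 : (2:ℝ)^n ≤ ((n:ℝ)+1) * m := by
      have := two_pow_le n
      have hcast : ((2^n : ℕ) : ℝ) ≤ (((n+1) * n.choose (n/2) : ℕ) : ℝ) := by exact_mod_cast this
      push_cast at hcast
      convert hcast using 2 <;> norm_num
    have hnp : (0:ℝ) < (n:ℝ) + 1 := by positivity
    have h4 : (s:ℝ) * (n:ℝ)^s * ((n:ℝ)+1) ≤ (ε/2) * (((n:ℝ)+1) * m) := by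
      calc (s:ℝ) * (n:ℝ)^s * ((n:ℝ)+1) ≤ (ε/2) * 2^n := h2
        _ ≤ (ε/2) * (((n:ℝ)+1) * m) := by
            apply mul_le_mul_of_nonneg_left h3 (by linarith)
    have h5 : (s:ℝ) * (n:ℝ)^s ≤ (ε/2) * m := by
      have := h4
      rw [show (ε/2) * (((n:ℝ)+1) * m) = ((ε/2) * m) * ((n:ℝ)+1) by ring] at this
      exact le_of_mul_le_mul_right this hnp
    linarith
  have hcount : (F.card : ℝ) ≤ (Fw.card : ℝ) + ((F.filter (fun y => ¬ (y.card + s ≤ n))).card : ℝ) := by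
    rw [← hsplit]
    push_cast
    linarith
  have : (F.card : ℝ) ≤ (2 + ε) * m := by
    calc (F.card : ℝ) ≤ (Fw.card : ℝ) + ((F.filter (fun y => ¬ (y.card + s ≤ n))).card : ℝ) := hcount
      _ ≤ (2 + ε/2) * m + (ε/2) * m := add_le_add hFwR htailR
      _ = (2 + ε) * m := by ring
  rw [hm] at this
  linarith [hF]


end Fence

/-- If `|F| > (2+ε)·C(n, ⌊n/2⌋)` for fixed `ε > 0` and `n` sufficiently large,
then `F ⊆ 2^[n]` contains five distinct sets `A, B, C, D, E` with `A ⊊ B`,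
`A ⊊ C`, `D ⊊ C` and `D ⊊ E`, i.e. a copy of the 5-element fence poset of
height 2. -/
theorem stmt14 (ε : ℝ) (hε : 0 < ε) :
    ∃ N : ℕ, ∀ n ≥ N, ∀ F : Finset (Finset (Fin n)),
      (2 + ε) * (n.choose (n / 2) : ℝ) < (F.card : ℝ) →
      ∃ A B C D E : Finset (Fin n),
        A ∈ F ∧ B ∈ F ∧ C ∈ F ∧ D ∈ F ∧ E ∈ F ∧
        A ≠ B ∧ A ≠ C ∧ A ≠ D ∧ A ≠ E ∧ B ≠ C ∧ B ≠ D ∧ B ≠ E ∧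
        C ≠ D ∧ C ≠ E ∧ D ≠ E ∧
        A ⊂ B ∧ A ⊂ C ∧ D ⊂ C ∧ D ⊂ E := by
  obtain ⟨N, hN⟩ := Fence.stmt14' ε hε
  exact ⟨N, fun n hn F hF => hN n hn F hF⟩
end
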